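/- arXiv:0901.3899 — 4 statements merged into one kernel-verified Lean document; each statement's English description precedes it below -/
import Mathlib

section
/- If Δ is a connected locally complete intersection simplicial complex, then Δ is pure, i.e., all facets of Δ have the same dimension. -/
open MvPolynomial

set_option synthInstance.maxHeartbeats 1000000
set_option maxHeartbeats 1000000

/-- A simplicial complex whose vertices lie in `Fin n`: a family of finsets
("faces") containing `∅` and closed under taking subsets.  The vertex set of
the complex is the set of `v` with `{v}` a face. -/
structure SimComplex (n : ℕ) where
  faces : Set (Finset (Fin n))
  empty_mem : ∅ ∈ faces
  down_closed : ∀ {F G : Finset (Fin n)}, F ∈ faces → G ⊆ F → G ∈ faces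

namespace SimComplex

variable {n m : ℕ}

/-- The vertex set of a complex. -/
def vertices (Δ : SimComplex n) : Set (Fin n) := {v | {v} ∈ Δ.faces}

/-- `Δ` is a simplicial complex on the full vertex set `[n] = Fin n`,
i.e. every singleton is a face. -/
def OnFullVertexSet (Δ : SimComplex n) : Prop := ∀ v : Fin n, {v} ∈ Δ.faces

/-- The dimension of a simplicial complex, as an integer:
`max {#F : F a face} - 1`. -/
noncomputable def dim (Δ : SimComplex n) : ℤ :=
  (((Set.toFinite Δ.faces).toFinset.sup (fun F => F.card) : ℕ) : ℤ) - 1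

/-- A facet is a face maximal under inclusion. -/
def IsFacet (Δ : SimComplex n) (F : Finset (Fin n)) : Prop :=
  F ∈ Δ.faces ∧ ∀ G ∈ Δ.faces, F ⊆ G → F = G

/-- A complex is pure if all facets have the same cardinality. -/
def Pure (Δ : SimComplex n) : Prop :=
  ∀ F G : Finset (Fin n), Δ.IsFacet F → Δ.IsFacet G → F.card = G.card

/-- A complex is connected if it is not the union of two nonempty
subcomplexes supported on disjoint nonempty vertex sets. -/
def Connected (Δ : SimComplex n) : Prop :=
  ¬ ∃ V₁ V₂ : Set (Fin n), V₁.Nonempty ∧ V₂.Nonempty ∧ Disjoint V₁ V₂ ∧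
      V₁ ∪ V₂ = Δ.vertices ∧
      ∀ F ∈ Δ.faces, ((F : Set (Fin n)) ⊆ V₁ ∨ (F : Set (Fin n)) ⊆ V₂)

/-- The link of a face `F`:  `link Δ F = {G : G ∪ F ∈ Δ, G ∩ F = ∅}`. -/
def link (Δ : SimComplex n) (F : Finset (Fin n)) (hF : F ∈ Δ.faces) : SimComplex n where
  faces := {G | Disjoint G F ∧ G ∪ F ∈ Δ.faces}
  empty_mem := ⟨Finset.disjoint_empty_left F, by simpa using hF⟩
  down_closed := by
    rintro F' G ⟨hdis, hun⟩ hsub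
    exact ⟨hdis.mono_left hsub,
      Δ.down_closed hun (Finset.union_subset_union hsub (subset_refl F))⟩

/-- The restriction `Δ_W` of `Δ` to a set `W` of vertices. -/
def restrict (Δ : SimComplex n) (W : Set (Fin n)) : SimComplex n where
  faces := {F | F ∈ Δ.faces ∧ (F : Set (Fin n)) ⊆ W}
  empty_mem := ⟨Δ.empty_mem, by simp⟩
  down_closed := by
    rintro F G ⟨hF, hFW⟩ hsub
    exact ⟨Δ.down_closed hF hsub, le_trans (Finset.coe_subset.mpr hsub) hFW⟩

/-- The simplicial complex spanned by a family of finsets. -/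
def ofFamily (H : Set (Finset (Fin n))) : SimComplex n where
  faces := {F | F = ∅ ∨ ∃ G ∈ H, F ⊆ G}
  empty_mem := Or.inl rfl
  down_closed := by
    rintro F G (rfl | ⟨G', hG', hFG⟩) hGF
    · exact Or.inl (Finset.subset_empty.mp hGF)
    · exact Or.inr ⟨G', hG', hGF.trans hFG⟩

/-- The union of two complexes on the same ambient vertex set (used for
complexes supported on disjoint vertex sets). -/
def union (Δ₁ Δ₂ : SimComplex n) : SimComplex n where
  faces := Δ₁.faces ∪ Δ₂.faces
  empty_mem := Or.inl Δ₁.empty_mem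
  down_closed := by
    rintro F G (h | h) hsub
    · exact Or.inl (Δ₁.down_closed h hsub)
    · exact Or.inr (Δ₂.down_closed h hsub)

/-- The `n`-gon: the pure one-dimensional complex with facets
`{i, i+1 (mod n)}`. -/
def nGon (n : ℕ) : SimComplex n :=
  ofFamily {F | ∃ i j : Fin n, (j : ℕ) = ((i : ℕ) + 1) % n ∧ F = {i, j}}

/-- The `n`-pointed path: the one-dimensional complex with facets `{i, i+1}`,
`i = 1, …, n-1`. -/
def nPath (n : ℕ) : SimComplex n :=
  ofFamily {F | ∃ i j : Fin n, (j : ℕ) = (i : ℕ) + 1 ∧ F = {i, j}}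

/-- An isomorphism of simplicial complexes: a relabeling of the vertices
carrying the faces of one complex bijectively onto the faces of the other. -/
def IsIsoTo (Δ : SimComplex n) (Γ : SimComplex m) : Prop :=
  ∃ e : Fin n → Fin m, Set.InjOn e Δ.vertices ∧
    (∀ F : Finset (Fin n), F ∈ Δ.faces → F.image e ∈ Γ.faces) ∧
    (∀ G : Finset (Fin m), G ∈ Γ.faces → ∃ F ∈ Δ.faces, F.image e = G)

/-- A minimal nonface of `Δ`; these index the minimal monomial generators of
the Stanley–Reisner ideal. -/
def IsMinimalNonface (Δ : SimComplex n) (F : Finset (Fin n)) : Prop :=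
  F ∉ Δ.faces ∧ ∀ G : Finset (Fin n), G ⊂ F → G ∈ Δ.faces

/-- The number of facets of maximal dimension; for a Stanley-Reisner ring this
is its multiplicity. -/
noncomputable def facetMult (Δ : SimComplex n) : ℕ :=
  Set.ncard {F : Finset (Fin n) | Δ.IsFacet F ∧ ((F.card : ℤ) - 1 = Δ.dim)}

end SimComplex

/-- An ideal is a complete intersection ideal if it is generated by a regular
sequence. -/
def IsCompleteIntersectionIdeal {R : Type*} [CommRing R] (I : Ideal R) : Prop :=
  ∃ rs : List R, RingTheory.Sequence.IsRegular R rs ∧ I = Ideal.span {x | x ∈ rs}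

/-- The Stanley–Reisner ideal of a complex: the ideal generated by the
squarefree monomials corresponding to nonfaces. -/
noncomputable def srIdeal (K : Type*) [Field K] {n : ℕ} (Δ : SimComplex n) :
    Ideal (MvPolynomial (Fin n) K) :=
  Ideal.span {m | ∃ F : Finset (Fin n), F ∉ Δ.faces ∧ m = ∏ i ∈ F, X i}

/-- A complete intersection complex: one whose Stanley–Reisner ideal is
generated by a regular sequence. -/
def IsCIComplex (K : Type*) [Field K] {n : ℕ} (Δ : SimComplex n) : Prop :=
  IsCompleteIntersectionIdeal (srIdeal K Δ)

/-- A locally complete intersection complex: the Stanley-Reisner ideal of the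
link of every vertex is a complete intersection ideal. -/
def LocallyCI (K : Type*) [Field K] {n : ℕ} (Δ : SimComplex n) : Prop :=
  ∀ (v : Fin n) (h : ({v} : Finset (Fin n)) ∈ Δ.faces), IsCIComplex K (Δ.link {v} h)

/-- A (graded or local) ring is a complete intersection ring if it admits a
presentation as a polynomial ring modulo an ideal generated by a regular
sequence. -/
def IsCompleteIntersectionRing (K : Type*) [Field K] (R : Type*) [CommRing R]
    [Algebra K R] : Prop :=
  ∃ (m : ℕ) (J : Ideal (MvPolynomial (Fin m) K)),
    IsCompleteIntersectionIdeal J ∧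
      Nonempty ((MvPolynomial (Fin m) K ⧸ J) ≃ₐ[K] R)

/-- The depth of a ring `R` with respect to an ideal `J`: the supremum of the
lengths of regular sequences contained in `J`. -/
noncomputable def ringDepth (R : Type*) [CommRing R] (J : Ideal R) : ℕ :=
  sSup {d : ℕ | ∃ rs : List R, rs.length = d ∧ (∀ r ∈ rs, r ∈ J) ∧
    RingTheory.Sequence.IsRegular R rs}

/-- Serre's condition `(S₂)`: `depth R_P ≥ min (dim R_P) 2` for every prime. -/
def SerreS2 (R : Type*) [CommRing R] : Prop :=
  ∀ (P : Ideal R) (hP : P.IsPrime),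
    letI := hP
    min (ringKrullDim (Localization.AtPrime P)) 2 ≤
      (ringDepth (Localization.AtPrime P) (IsLocalRing.maximalIdeal _) : WithBot (WithTop ℕ))

/-- The homogeneous maximal ideal of the quotient of a polynomial ring by a
homogeneous ideal. -/
noncomputable def quotMaxIdeal (K : Type*) [Field K] {n : ℕ} (I : Ideal (MvPolynomial (Fin n) K)) :
    Ideal (MvPolynomial (Fin n) K ⧸ I) :=
  (Ideal.span (Set.range X)).map (Ideal.Quotient.mk I)

/-- A standard graded algebra `S/I` is Cohen–Macaulay iff it admits a regular
sequence, inside the homogeneous maximal ideal, of length equal to its Krull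
dimension. -/
def IsCohenMacaulayQuot (K : Type*) [Field K] {n : ℕ}
    (I : Ideal (MvPolynomial (Fin n) K)) : Prop :=
  ∃ rs : List (MvPolynomial (Fin n) K ⧸ I),
    (∀ r ∈ rs, r ∈ quotMaxIdeal K I) ∧
    RingTheory.Sequence.IsRegular (MvPolynomial (Fin n) K ⧸ I) rs ∧
    ringKrullDim (MvPolynomial (Fin n) K ⧸ I) = rs.length

/-- A standard graded algebra `A = S/I` is Buchsbaum iff every system of
parameters is a weak `A`-sequence (Stückrad–Vogel):
`(x₁, …, x_{i-1}) : x_i ⊆ (x₁, …, x_{i-1}) : 𝔪`. -/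
def IsBuchsbaumQuot (K : Type*) [Field K] {n : ℕ}
    (I : Ideal (MvPolynomial (Fin n) K)) : Prop :=
  ∀ d : ℕ, ringKrullDim (MvPolynomial (Fin n) K ⧸ I) = d →
    ∀ x : Fin d → (MvPolynomial (Fin n) K ⧸ I),
      (∀ i, x i ∈ quotMaxIdeal K I) →
      ringKrullDim ((MvPolynomial (Fin n) K ⧸ I) ⧸ Ideal.span (Set.range x)) ≤ 0 →
      ∀ (i : Fin d) (a : MvPolynomial (Fin n) K ⧸ I),
        a * x i ∈ Ideal.span (x '' {j | j < i}) →
        ∀ b ∈ quotMaxIdeal K I, a * b ∈ Ideal.span (x '' {j | j < i})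

/-- A standard graded algebra `A = S/I` is Gorenstein iff it admits a system of
parameters which is a regular sequence generating an irreducible ideal. -/
def IsGorensteinQuot (K : Type*) [Field K] {n : ℕ}
    (I : Ideal (MvPolynomial (Fin n) K)) : Prop :=
  ∃ rs : List (MvPolynomial (Fin n) K ⧸ I),
    (∀ r ∈ rs, r ∈ quotMaxIdeal K I) ∧
    RingTheory.Sequence.IsRegular (MvPolynomial (Fin n) K ⧸ I) rs ∧
    ringKrullDim (MvPolynomial (Fin n) K ⧸ I) = rs.length ∧
    ∀ J₁ J₂ : Ideal (MvPolynomial (Fin n) K ⧸ I),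
      Ideal.span {x | x ∈ rs} = J₁ ⊓ J₂ →
      Ideal.span {x | x ∈ rs} = J₁ ∨ Ideal.span {x | x ∈ rs} = J₂

/-- The cumulative Hilbert function of `S/I`: the `K`-dimension of the image of
the polynomials of total degree at most `t`. -/
noncomputable def hilbFn (K : Type*) [Field K] {n : ℕ}
    (I : Ideal (MvPolynomial (Fin n) K)) (t : ℕ) : ℕ :=
  Module.finrank K (Submodule.map (Ideal.Quotient.mkₐ K I).toLinearMap
    (MvPolynomial.restrictTotalDegree (Fin n) K t))

/-- `S/I` has (Hilbert–Samuel) multiplicity `e`: writing `d = dim S/I`, the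
cumulative Hilbert function satisfies `dim_K (S/I)_{≤ t} ∼ e·t^d/d!`. -/
def HasMultiplicity (K : Type*) [Field K] {n : ℕ}
    (I : Ideal (MvPolynomial (Fin n) K)) (e : ℕ) : Prop :=
  ∃ d : ℕ, ringKrullDim (MvPolynomial (Fin n) K ⧸ I) = d ∧
    Filter.Tendsto
      (fun t : ℕ => ((d.factorial * hilbFn K I t : ℕ) : ℝ) / (t : ℝ) ^ d)
      Filter.atTop (nhds (e : ℝ))

/-- The Stanley–Reisner ideal of a complex relative to its own vertex set
(generated only by the monomials of nonfaces supported on the vertices). -/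
noncomputable def relSRIdeal (K : Type*) [Field K] {n : ℕ} (Δ : SimComplex n) :
    Ideal (MvPolynomial (Fin n) K) :=
  Ideal.span {m | ∃ F : Finset (Fin n), (F : Set (Fin n)) ⊆ Δ.vertices ∧
    F ∉ Δ.faces ∧ m = ∏ i ∈ F, X i}

/-! ### Auxiliary lemmas -/

section Aux

open RingTheory.Sequence Finset

variable {R : Type*} [CommRing R]

/-- Coefficients of a syzygy of a weakly regular sequence lie in the ideal
generated by the sequence. -/
lemma syzygy_mem_ofList :
    ∀ (rs : List R), IsWeaklyRegular R rs → ∀ a : ℕ → R,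
      (∑ i ∈ Finset.range rs.length, a i * rs.getD i 0) = 0 →
      ∀ i < rs.length, a i ∈ Ideal.ofList rs := by
  intro rs
  induction rs using List.reverseRecOn with
  | nil => intro _ a _ i hi; simp at hi
  | append_singleton l r ih =>
    intro hw a hs i hi
    have hlen : (l ++ [r]).length = l.length + 1 := by simp
    set k := l.length with hk
    have hwl : IsWeaklyRegular R l :=
      ((isWeaklyRegular_append_iff R l [r]).mp hw).1
    have hreg : IsSMulRegular (R ⧸ (Ideal.ofList l • ⊤ : Submodule R R)) r := by
      have h1 := hw.regular_mod_prev k (by omega)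
      have h2 : (l ++ [r]).take k = l := List.take_left
      have h3 : (l ++ [r])[k] = r := by
        rw [List.getElem_append_right (by omega)]
        simp
      rwa [h2, h3] at h1
    have hNJ : (Ideal.ofList l • ⊤ : Submodule R R) = (Ideal.ofList l : Ideal R) := by
      rw [Ideal.smul_eq_mul, Ideal.mul_top]
    have hgetD : ∀ j < k, (l ++ [r]).getD j 0 = l.getD j 0 := by
      intro j hj
      rw [List.getD_eq_getElem _ _ (by omega), List.getD_eq_getElem _ _ hj,
        List.getElem_append_left hj]
    have hgetDk : (l ++ [r]).getD k 0 = r := by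
      rw [List.getD_eq_getElem _ _ (by omega)]
      rw [List.getElem_append_right (by omega)]
      simp
    have hmemD : ∀ j < k, l.getD j 0 ∈ Ideal.ofList l := by
      intro j hj
      rw [List.getD_eq_getElem _ _ hj]
      exact Ideal.subset_span (List.getElem_mem hj)
    -- split the sum
    rw [hlen, Finset.sum_range_succ, hgetDk] at hs
    have hsum1 : (∑ j ∈ Finset.range k, a j * (l ++ [r]).getD j 0)
        = ∑ j ∈ Finset.range k, a j * l.getD j 0 :=
      Finset.sum_congr rfl fun j hj => by
        rw [hgetD j (Finset.mem_range.mp hj)]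
    rw [hsum1] at hs
    have hmem : a k * r ∈ Ideal.ofList l := by
      have : a k * r = -(∑ j ∈ Finset.range k, a j * l.getD j 0) := by
        linear_combination hs
      rw [this]
      exact neg_mem (Ideal.sum_mem _ fun j hj =>
        Ideal.mul_mem_left _ _ (hmemD j (Finset.mem_range.mp hj)))
    have hak : a k ∈ Ideal.ofList l := by
      have h0 : r • (Submodule.Quotient.mk (a k) :
          R ⧸ (Ideal.ofList l • ⊤ : Submodule R R)) = r • (0 : _) := by
        rw [smul_zero, ← Submodule.Quotient.mk_smul,
          Submodule.Quotient.mk_eq_zero, hNJ, smul_eq_mul, mul_comm]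
        exact hmem
      have := hreg h0
      rw [Submodule.Quotient.mk_eq_zero, hNJ] at this
      exact this
    have hsubl : Ideal.ofList l ≤ Ideal.ofList (l ++ [r]) :=
      Ideal.span_mono fun x hx => List.mem_append_left _ hx
    have hrmem : r ∈ Ideal.ofList (l ++ [r]) :=
      Ideal.subset_span (by simp)
    rcases Nat.lt_or_ge i k with hik | hik
    · -- use representation of a k and induction
      have hrange : {x : R | x ∈ l} = Set.range (fun j : Fin k => l.get j) := by
        ext x
        simpa [Set.mem_setOf_eq] using List.mem_iff_get
      have hak' : a k ∈ Ideal.span (Set.range (fun j : Fin k => l.get j)) := by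
        rwa [← hrange]
      obtain ⟨c, hc⟩ := Ideal.mem_span_range_iff_exists_fun.mp hak'
      set c' : ℕ → R := fun j => if h : j < k then c ⟨j, h⟩ else 0 with hc'
      have hc'sum : (∑ j ∈ Finset.range k, c' j * l.getD j 0) = a k := by
        rw [← hc, ← Fin.sum_univ_eq_sum_range]
        refine Finset.sum_congr rfl fun j _ => ?_
        simp only [hc', j.isLt, dif_pos, Fin.eta]
        rw [List.getD_eq_getElem _ _ j.isLt]
        rfl
      have hs2 : (∑ j ∈ Finset.range k, (a j + c' j * r) * l.getD j 0) = 0 := by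
        have : (∑ j ∈ Finset.range k, (a j + c' j * r) * l.getD j 0)
            = (∑ j ∈ Finset.range k, a j * l.getD j 0)
              + (∑ j ∈ Finset.range k, c' j * l.getD j 0) * r := by
          rw [Finset.sum_mul, ← Finset.sum_add_distrib]
          exact Finset.sum_congr rfl fun j _ => by ring
        rw [this, hc'sum]
        linear_combination hs
      have hmemi := ih hwl (fun j => a j + c' j * r) hs2 i hik
      have : a i = (a i + c' i * r) - c' i * r := by ring
      rw [this]
      exact sub_mem (hsubl hmemi) (Ideal.mul_mem_left _ _ hrmem)
    · have : i = k := by omega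
      rw [this]
      exact hsubl hak

lemma syzygy_mem_ofList_fin (rs : List R) (h : IsWeaklyRegular R rs)
    (a : Fin rs.length → R) (hs : (∑ i, a i * rs.get i) = 0) (i : Fin rs.length) :
    a i ∈ Ideal.ofList rs := by
  set a' : ℕ → R := fun j => if hj : j < rs.length then a ⟨j, hj⟩ else 0 with ha'
  have hsum : (∑ j ∈ Finset.range rs.length, a' j * rs.getD j 0) = 0 := by
    rw [← Fin.sum_univ_eq_sum_range, ← hs]
    refine Finset.sum_congr rfl fun j _ => ?_
    simp only [ha', j.isLt, dif_pos, Fin.eta]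
    rw [List.getD_eq_getElem _ _ j.isLt]
    rfl
  have := syzygy_mem_ofList rs h a' hsum i i.isLt
  simpa only [ha', i.isLt, dif_pos, Fin.eta] using this

end Aux

section SR

open MvPolynomial Finset

variable {K : Type} [Field K] {n : ℕ}

/-- The exponent vector of a squarefree monomial. -/
noncomputable def expOf (F : Finset (Fin n)) : Fin n →₀ ℕ :=
  ∑ i ∈ F, Finsupp.single i 1

lemma expOf_apply (F : Finset (Fin n)) (j : Fin n) :
    expOf F j = if j ∈ F then 1 else 0 := by
  classical
  rw [expOf, Finset.sum_apply']
  simp [Finsupp.single_apply]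

lemma expOf_support (F : Finset (Fin n)) : (expOf F).support = F := by
  ext j
  simp only [Finsupp.mem_support_iff, expOf_apply]
  split <;> simp_all

lemma prod_X_eq_monomial_expOf (F : Finset (Fin n)) :
    (∏ i ∈ F, X i : MvPolynomial (Fin n) K) = monomial (expOf F) 1 := by
  classical
  induction F using Finset.induction with
  | empty => simp [expOf]
  | @insert a F ha ih =>
    have hX : (X a : MvPolynomial (Fin n) K) = monomial (Finsupp.single a 1) 1 := by
      rw [← X_pow_eq_monomial, pow_one]
    rw [Finset.prod_insert ha, ih, hX, monomial_mul, one_mul]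
    congr 1
    rw [expOf, expOf, Finset.sum_insert ha]

lemma coeff_eq_zero_of_mem_srIdeal {Γ : SimComplex n} {f : MvPolynomial (Fin n) K}
    (hf : f ∈ srIdeal K Γ) : ∀ (d : Fin n →₀ ℕ), d.support ∈ Γ.faces → coeff d f = 0 := by
  classical
  refine Submodule.span_induction (p := fun f _ => ∀ d : Fin n →₀ ℕ,
    d.support ∈ Γ.faces → coeff d f = 0) ?_ ?_ ?_ ?_ hf
  · rintro x ⟨F, hF, rfl⟩ d hd
    rw [prod_X_eq_monomial_expOf, coeff_monomial]
    split
    · exfalso; apply hF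
      have : (expOf F).support = d.support := by rw [‹expOf F = d›]
      rw [expOf_support] at this
      rwa [this]
    · rfl
  · intro d _; simp
  · intro x y _ _ hx hy d hd
    rw [coeff_add, hx d hd, hy d hd, add_zero]
  · intro a x _ hx d hd
    rw [smul_eq_mul, coeff_mul]
    refine Finset.sum_eq_zero fun p hp => ?_
    have hpd : p.1 + p.2 = d := Finset.HasAntidiagonal.mem_antidiagonal.mp hp
    have hsub : p.2.support ⊆ d.support := by
      intro j hj
      rw [Finsupp.mem_support_iff] at hj ⊢
      intro h0
      apply hj
      have : d j = p.1 j + p.2 j := by rw [← hpd]; rfl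
      omega
    have : p.2.support ∈ Γ.faces := Γ.down_closed hd hsub
    rw [hx p.2 this, mul_zero]

/-- Main algebraic input: in a complete intersection complex, distinct minimal
nonfaces are disjoint. -/
lemma disjoint_of_minimalNonfaces {Γ : SimComplex n} (hci : IsCIComplex K Γ)
    {F G : Finset (Fin n)} (hF : Γ.IsMinimalNonface F) (hG : Γ.IsMinimalNonface G)
    (hne : F ≠ G) : Disjoint F G := by
  classical
  by_contra hdis
  obtain ⟨x, hxF, hxG⟩ := Finset.not_disjoint_iff.mp hdis
  obtain ⟨rs, hreg, hspan⟩ := hci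
  -- basic combinatorial facts
  have hnFG : ¬ F ⊆ G := by
    intro hsub
    exact hF.1 (hG.2 F (Finset.ssubset_iff_subset_ne.mpr ⟨hsub, hne⟩))
  obtain ⟨y, hyF, hyG⟩ := Finset.not_subset.mp hnFG
  have hGFface : G \ F ∈ Γ.faces := by
    apply hG.2
    rw [Finset.ssubset_iff_of_subset Finset.sdiff_subset]
    exact ⟨x, hxG, by simp [Finset.mem_sdiff, hxF]⟩
  -- memberships and representations
  have hrange : {x : MvPolynomial (Fin n) K | x ∈ rs} = Set.range rs.get := by
    ext z; simp [List.mem_iff_get]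
  have hspan' : srIdeal K Γ = Ideal.span (Set.range rs.get) := by
    rw [hspan, hrange]
  have hmF : (∏ i ∈ F, X i : MvPolynomial (Fin n) K) ∈ srIdeal K Γ :=
    Ideal.subset_span ⟨F, hF.1, rfl⟩
  have hmG : (∏ i ∈ G, X i : MvPolynomial (Fin n) K) ∈ srIdeal K Γ :=
    Ideal.subset_span ⟨G, hG.1, rfl⟩
  obtain ⟨p, hp⟩ := Ideal.mem_span_range_iff_exists_fun.mp (hspan' ▸ hmF)
  obtain ⟨q, hq⟩ := Ideal.mem_span_range_iff_exists_fun.mp (hspan' ▸ hmG)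
  -- the syzygy
  have hrel : (∏ i ∈ G \ F, X i) * (∏ i ∈ F, X i)
      = (∏ i ∈ F \ G, X i) * (∏ i ∈ G, X i : MvPolynomial (Fin n) K) := by
    rw [← Finset.prod_union Finset.sdiff_disjoint,
      ← Finset.prod_union Finset.sdiff_disjoint,
      Finset.sdiff_union_self_eq_union, Finset.sdiff_union_self_eq_union,
      Finset.union_comm]
  set a : Fin rs.length → MvPolynomial (Fin n) K :=
    fun i => (∏ i ∈ G \ F, X i) * p i - (∏ i ∈ F \ G, X i) * q i with ha
  have hsum : (∑ i, a i * rs.get i) = 0 := by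
    have : (∑ i, a i * rs.get i)
        = (∏ i ∈ G \ F, X i) * (∑ i, p i * rs.get i)
          - (∏ i ∈ F \ G, X i) * (∑ i, q i * rs.get i) := by
      rw [Finset.mul_sum, Finset.mul_sum, ← Finset.sum_sub_distrib]
      exact Finset.sum_congr rfl fun i _ => by rw [ha]; ring
    rw [this, hp, hq, hrel, sub_self]
  have hmema : ∀ i, a i ∈ srIdeal K Γ := by
    intro i
    rw [hspan]
    exact syzygy_mem_ofList_fin rs hreg.toIsWeaklyRegular a hsum i
  -- constant coefficients of the `p i` all vanish
  have hconst : ∀ i, coeff 0 (p i) = 0 := by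
    intro i
    have hcz := coeff_eq_zero_of_mem_srIdeal (hmema i) (expOf (G \ F))
      (by rw [expOf_support]; exact hGFface)
    rw [ha] at hcz
    simp only [coeff_sub] at hcz
    rw [prod_X_eq_monomial_expOf, prod_X_eq_monomial_expOf,
      coeff_monomial_mul', coeff_monomial_mul'] at hcz
    rw [if_pos le_rfl, if_neg] at hcz
    · simpa using hcz
    · intro hle
      have := hle y
      rw [expOf_apply, expOf_apply] at this
      simp only [Finset.mem_sdiff, hyF, hyG] at this
      simp at this
  -- contradiction at the coefficient of the monomial of F
  have h1 : coeff (expOf F) (∏ i ∈ F, X i : MvPolynomial (Fin n) K) = 1 := by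
    rw [prod_X_eq_monomial_expOf, coeff_monomial, if_pos rfl]
  have h0 : coeff (expOf F) (∑ i, p i * rs.get i : MvPolynomial (Fin n) K) = 0 := by
    rw [coeff_sum]
    refine Finset.sum_eq_zero fun i _ => ?_
    rw [coeff_mul]
    refine Finset.sum_eq_zero fun dd hdd => ?_
    have hd : dd.1 + dd.2 = expOf F := Finset.HasAntidiagonal.mem_antidiagonal.mp hdd
    by_cases hz : dd.1 = 0
    · rw [hz] at hd ⊢
      rw [hconst i, zero_mul]
    · obtain ⟨j, hj⟩ : ∃ j, dd.1 j ≠ 0 := by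
        by_contra hall
        push_neg at hall
        exact hz (Finsupp.ext hall)
      have happ : ∀ k, dd.1 k + dd.2 k = expOf F k := fun k => by
        rw [← hd]; rfl
      have hjF : j ∈ F := by
        by_contra hjF
        have := happ j
        rw [expOf_apply, if_neg hjF] at this
        omega
      have hj2 : dd.2 j = 0 := by
        have := happ j
        rw [expOf_apply, if_pos hjF] at this
        omega
      have hsub : dd.2.support ⊆ F.erase j := by
        intro k hk
        rw [Finsupp.mem_support_iff] at hk
        have hk2 := happ k
        rw [expOf_apply] at hk2
        rw [Finset.mem_erase]
        constructor
        · intro hkj; subst hkj; exact hk hj2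
        · by_contra hkF
          rw [if_neg hkF] at hk2
          omega
      have hface : dd.2.support ∈ Γ.faces :=
        hF.2 _ (hsub.trans_ssubset (Finset.erase_ssubset hjF))
      have hrsmem : rs.get i ∈ srIdeal K Γ := by
        rw [hspan]
        exact Ideal.subset_span (rs.get_mem i)
      rw [coeff_eq_zero_of_mem_srIdeal hrsmem dd.2 hface, mul_zero]
  rw [hp, h1] at h0
  exact one_ne_zero h0

end SR

section Comb

open Finset

variable {n : ℕ}

lemma exists_minimalNonface_subset {Γ : SimComplex n} :
    ∀ F : Finset (Fin n), F ∉ Γ.faces → ∃ N ⊆ F, Γ.IsMinimalNonface N := by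
  classical
  intro F
  induction F using Finset.strongInduction with
  | _ F ih =>
    intro hF
    by_cases h : ∀ G ⊂ F, G ∈ Γ.faces
    · exact ⟨F, subset_rfl, hF, h⟩
    · push_neg at h
      obtain ⟨G, hGF, hGnf⟩ := h
      obtain ⟨N, hNG, hN⟩ := ih G hGF hGnf
      exact ⟨N, hNG.trans hGF.subset, hN⟩

lemma exists_facet_superset {Γ : SimComplex n} (F : Finset (Fin n))
    (hF : F ∈ Γ.faces) : ∃ G, Γ.IsFacet G ∧ F ⊆ G := by
  obtain ⟨G, ⟨hGf, hFG⟩, hmax⟩ :=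
    Set.Finite.exists_maximalFor (fun s : Finset (Fin n) => s.card)
      {s | s ∈ Γ.faces ∧ F ⊆ s} (Set.toFinite _) ⟨F, hF, subset_rfl⟩
  refine ⟨G, ⟨hGf, fun H hH hGH => ?_⟩, hFG⟩
  have := hmax ⟨hH, hFG.trans hGH⟩ (Finset.card_le_card hGH)
  exact Finset.eq_of_subset_of_card_le hGH this

lemma pure_of_disjoint_minimalNonfaces {Γ : SimComplex n}
    (h : ∀ F G : Finset (Fin n), Γ.IsMinimalNonface F → Γ.IsMinimalNonface G →
      F ≠ G → Disjoint F G) : Γ.Pure := by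
  classical
  have key : ∀ A : Finset (Fin n), Γ.IsFacet A →
      {N : Finset (Fin n) | Γ.IsMinimalNonface N ∧ ↑N ⊆ Γ.vertices}.ncard + A.card
        = Γ.vertices.ncard := by
    intro A hA
    have hAv : ↑A ⊆ Γ.vertices := by
      intro v hv
      exact Γ.down_closed hA.1 (Finset.singleton_subset_iff.mpr hv)
    have hex : ∀ v : Fin n, v ∈ Γ.vertices \ ↑A →
        ∃ N, Γ.IsMinimalNonface N ∧ v ∈ N ∧ N ⊆ insert v A := by
      rintro v ⟨hv1, hv2⟩
      have hnf : insert v A ∉ Γ.faces := by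
        intro hmem
        have := hA.2 _ hmem (Finset.subset_insert v A)
        rw [← this] at hmem
        exact hv2 (by rw [this]; exact Finset.mem_insert_self v A)
      obtain ⟨N, hNsub, hN⟩ := exists_minimalNonface_subset _ hnf
      refine ⟨N, hN, ?_, hNsub⟩
      by_contra hvN
      have : N ⊆ A := fun w hw => by
        rcases Finset.mem_insert.mp (hNsub hw) with rfl | hwA
        · exact absurd hw hvN
        · exact hwA
      exact hN.1 (Γ.down_closed hA.1 this)
    choose! f hf1 hf2 hf3 using hex
    have himg : f '' (Γ.vertices \ ↑A)
        = {N | Γ.IsMinimalNonface N ∧ ↑N ⊆ Γ.vertices} := by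
      ext N
      constructor
      · rintro ⟨v, hv, rfl⟩
        refine ⟨hf1 v hv, ?_⟩
        intro w hw
        rcases Finset.mem_insert.mp (hf3 v hv hw) with rfl | hwA
        · exact hv.1
        · exact hAv hwA
      · rintro ⟨hN, hNv⟩
        have : ¬ N ⊆ A := fun hsub => hN.1 (Γ.down_closed hA.1 hsub)
        obtain ⟨v, hvN, hvA⟩ := Finset.not_subset.mp this
        have hv : v ∈ Γ.vertices \ ↑A := ⟨hNv hvN, hvA⟩
        refine ⟨v, hv, ?_⟩
        by_contra hne
        exact Finset.disjoint_left.mp (h _ _ (hf1 v hv) hN hne) (hf2 v hv) hvN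
    have hinj : Set.InjOn f (Γ.vertices \ ↑A) := by
      intro v hv v' hv' heq
      have hv'mem : v' ∈ f v' := hf2 v' hv'
      rw [← heq] at hv'mem
      rcases Finset.mem_insert.mp (hf3 v hv hv'mem) with h' | h'
      · exact h'.symm ▸ rfl
      · exact absurd h' hv'.2
    have h1 : (Γ.vertices \ ↑A).ncard
        = {N | Γ.IsMinimalNonface N ∧ ↑N ⊆ Γ.vertices}.ncard := by
      rw [← himg, Set.ncard_image_of_injOn hinj]
    have hdiff := Set.ncard_diff_add_ncard_of_subset hAv (Set.toFinite _)
    rw [Set.ncard_coe_finset] at hdiff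
    rw [h1] at hdiff
    exact hdiff
  intro F G hF hG
  have h1 := key F hF
  have h2 := key G hG
  omega

lemma link_isFacet_erase {Δ : SimComplex n} {F : Finset (Fin n)} (hF : Δ.IsFacet F)
    {v : Fin n} (hv : v ∈ F) (hvf : ({v} : Finset (Fin n)) ∈ Δ.faces) :
    (Δ.link {v} hvf).IsFacet (F.erase v) := by
  classical
  have hvnot : v ∉ F.erase v := Finset.notMem_erase v F
  have herase : F.erase v ∪ {v} = F := by
    rw [Finset.union_comm, ← Finset.insert_eq, Finset.insert_erase hv]
  constructor
  · exact ⟨Finset.disjoint_singleton_right.mpr hvnot, by rw [herase]; exact hF.1⟩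
  · rintro G ⟨hGd, hGf⟩ hsub
    have hvG : v ∉ G := Finset.disjoint_singleton_right.mp hGd
    have hFsub : F ⊆ G ∪ {v} := by
      intro w hw
      by_cases hwv : w = v
      · rw [hwv]; exact Finset.mem_union_right _ (Finset.mem_singleton_self v)
      · exact Finset.mem_union_left _ (hsub (Finset.mem_erase.mpr ⟨hwv, hw⟩))
    have hFeq := hF.2 _ hGf hFsub
    ext w
    simp only [Finset.mem_erase, hFeq, Finset.mem_union, Finset.mem_singleton]
    constructor
    · rintro ⟨hwv, hw | hw⟩
      · exact hw
      · exact absurd hw hwv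
    · intro hw
      exact ⟨fun hwv => hvG (hwv ▸ hw), Or.inl hw⟩

end Comb

/-- **Corollary 1.3.** A connected locally complete intersection complex is
pure. -/
theorem pure_of_connected_of_locallyCI (K : Type) [Field K] {n : ℕ}
    (Δ : SimComplex n) (hfull : Δ.OnFullVertexSet) (hconn : Δ.Connected)
    (hlci : LocallyCI K Δ) : Δ.Pure := by
  classical
  intro F G hF hG
  rcases Nat.eq_zero_or_pos n with rfl | hn
  · have hFe : F = ∅ := Finset.eq_empty_of_forall_notMem fun x _ => x.elim0
    have hGe : G = ∅ := Finset.eq_empty_of_forall_notMem fun x _ => x.elim0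
    rw [hFe, hGe]
  · set v₀ : Fin n := ⟨0, hn⟩
    -- every link is pure
    have linkpure : ∀ v : Fin n, (Δ.link {v} (hfull v)).Pure := fun v =>
      pure_of_disjoint_minimalNonfaces fun A B hA hB hAB =>
        disjoint_of_minimalNonfaces (hlci v (hfull v)) hA hB hAB
    -- facets sharing a vertex have the same cardinality
    have samecard : ∀ (v : Fin n) (A B : Finset (Fin n)), Δ.IsFacet A →
        Δ.IsFacet B → v ∈ A → v ∈ B → A.card = B.card := by
      intro v A B hA hB hvA hvB
      have h1 := linkpure v _ _ (link_isFacet_erase hA hvA (hfull v))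
        (link_isFacet_erase hB hvB (hfull v))
      have hA1 : 1 ≤ A.card := Finset.card_pos.mpr ⟨v, hvA⟩
      have hB1 : 1 ≤ B.card := Finset.card_pos.mpr ⟨v, hvB⟩
      rw [Finset.card_erase_of_mem hvA, Finset.card_erase_of_mem hvB] at h1
      omega
    -- every vertex lies in a facet
    have dd : ∀ v : Fin n, ∃ A, Δ.IsFacet A ∧ v ∈ A := by
      intro v
      obtain ⟨A, hA, hsub⟩ := exists_facet_superset _ (hfull v)
      exact ⟨A, hA, hsub (Finset.mem_singleton_self v)⟩
    choose FF hFF1 hFF2 using dd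
    -- the facet cardinality is constant over vertices, by connectedness
    have dconst : ∀ v : Fin n, (FF v).card = (FF v₀).card := by
      by_contra hne
      push_neg at hne
      obtain ⟨v₁, hv₁⟩ := hne
      apply hconn
      refine ⟨{v | (FF v).card = (FF v₀).card}, {v | (FF v).card ≠ (FF v₀).card},
        ⟨v₀, rfl⟩, ⟨v₁, hv₁⟩, ?_, ?_, ?_⟩
      · rw [Set.disjoint_left]
        intro v hv hv'
        exact hv' hv
      · ext v
        simp only [Set.mem_union, Set.mem_setOf_eq]
        constructor
        · intro _; exact hfull v
        · intro _; exact em _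
      · intro A hA
        rcases A.eq_empty_or_nonempty with rfl | hAne
        · left; simp
        · obtain ⟨H, hH, hsub⟩ := exists_facet_superset A hA
          have key : ∀ v ∈ A, (FF v).card = H.card := fun v hv =>
            samecard v (FF v) H (hFF1 v) hH (hFF2 v) (hsub hv)
          by_cases hc : H.card = (FF v₀).card
          · left
            intro v hv
            have hv' : v ∈ A := hv
            simp only [Set.mem_setOf_eq]
            rw [key v hv', hc]
          · right
            intro v hv
            have hv' : v ∈ A := hv
            simp only [Set.mem_setOf_eq]
            rw [key v hv']
            exact hc
    -- conclude
    have hnonempty : ∀ A : Finset (Fin n), Δ.IsFacet A → A.Nonempty := by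
      intro A hA
      rcases A.eq_empty_or_nonempty with rfl | h
      · exfalso
        have := hA.2 {v₀} (hfull v₀) (Finset.empty_subset _)
        exact (Finset.singleton_ne_empty v₀) this.symm
      · exact h
    obtain ⟨v, hv⟩ := hnonempty F hF
    obtain ⟨w, hw⟩ := hnonempty G hG
    calc F.card = (FF v).card := samecard v F (FF v) hF (hFF1 v) hv (hFF2 v)
    _ = (FF v₀).card := dconst v
    _ = (FF w).card := (dconst w).symm
    _ = G.card := samecard w (FF w) G (hFF1 w) hG (hFF2 w) hw
end

section
/- Let Δ be a locally complete intersection simplicial complex on V and let x_1, x_2, y ∈ V be distinct vertices with X_1Y ∈ I_Δ and X_2Y ∈ I_Δ (where capital letters denote the variables corresponding to the vertices). Then for every vertex z ∈ V ∖ {x_1,x_2,y}, at least one of the monomials X_1Z, X_2Z, YZ belongs to I_Δ. -/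
open MvPolynomial

set_option synthInstance.maxHeartbeats 1000000
set_option maxHeartbeats 1000000

open RingTheory.Sequence in
lemma syzygy_mem {R : Type*} [CommRing R] :
    ∀ (rs : List R), IsWeaklyRegular R rs →
      ∀ c : Fin rs.length → R, (∑ i, c i * rs.get i) = 0 →
        ∀ i, c i ∈ Ideal.ofList rs := by
  intro rs
  induction rs using List.reverseRecOn with
  | nil => intro _ c _ i; exact i.elim0
  | append_singleton l f ih =>
    intro hreg c hsum i
    have hlen : (l ++ [f]).length = l.length + 1 := by simp
    have hsum2 : ∑ j : Fin (l.length + 1),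
        c (Fin.cast hlen.symm j) * (l ++ [f]).get (Fin.cast hlen.symm j) = 0 := by
      rw [Fin.sum_congr' (fun i => c i * (l ++ [f]).get i) hlen.symm]
      exact hsum
    have hget : ∀ j : Fin l.length,
        (l ++ [f]).get (Fin.cast hlen.symm j.castSucc) = l.get j := by
      intro j
      simp [List.getElem_append_left]
    have hgetlast : (l ++ [f]).get (Fin.cast hlen.symm (Fin.last l.length)) = f := by
      simp [List.getElem_concat_length]
    rw [Fin.sum_univ_castSucc] at hsum2
    simp only [hget, hgetlast] at hsum2
    obtain ⟨hl, hf1⟩ := (isWeaklyRegular_append_iff R l [f]).mp hreg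
    have hf : IsSMulRegular (R ⧸ (Ideal.ofList l • ⊤ : Submodule R R)) f :=
      (isWeaklyRegular_singleton_iff _ f).mp hf1
    set clast := c (Fin.cast hlen.symm (Fin.last l.length)) with hclastdef
    have hsmultop : Ideal.ofList l • (⊤ : Submodule R R) = Ideal.ofList l := by
      rw [Ideal.smul_eq_mul, Ideal.mul_top]
    have hclast : clast ∈ Ideal.ofList l := by
      have hmem : f * clast ∈ Ideal.ofList l := by
        have he : f * clast = -(∑ j : Fin l.length,
            c (Fin.cast hlen.symm j.castSucc) * l.get j) := by
          linear_combination hsum2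
        rw [he]
        exact neg_mem (Ideal.sum_mem _ fun j _ =>
          Ideal.mul_mem_left _ _ (Ideal.subset_span (l.get_mem j)))
      have h0 : f • (Submodule.Quotient.mk clast : R ⧸ (Ideal.ofList l • ⊤ : Submodule R R))
          = f • (0 : R ⧸ (Ideal.ofList l • ⊤ : Submodule R R)) := by
        rw [smul_zero, ← Submodule.Quotient.mk_smul, Submodule.Quotient.mk_eq_zero, hsmultop]
        simpa [smul_eq_mul] using hmem
      have := hf h0
      rwa [Submodule.Quotient.mk_eq_zero, hsmultop] at this
    have hofl : Ideal.ofList l = Ideal.span (Set.range l.get) := by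
      apply congrArg Ideal.span
      ext x; simp [List.mem_iff_get]
    obtain ⟨d, hd⟩ := Ideal.mem_span_range_iff_exists_fun.mp (hofl ▸ hclast)
    have hnew : ∑ j : Fin l.length,
        (c (Fin.cast hlen.symm j.castSucc) + d j * f) * l.get j = 0 := by
      simp only [add_mul, Finset.sum_add_distrib]
      have h1 : ∑ j : Fin l.length, c (Fin.cast hlen.symm j.castSucc) * l.get j
          = -(clast * f) := by linear_combination hsum2
      have h2 : ∑ j : Fin l.length, d j * f * l.get j = f * ∑ j, d j * l.get j := by
        rw [Finset.mul_sum]; exact Finset.sum_congr rfl fun j _ => by ring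
      rw [h1, h2, hd]; ring
    have hin := ih hl _ hnew
    have hsub : Ideal.ofList l ≤ Ideal.ofList (l ++ [f]) := by
      rw [Ideal.ofList_append]; exact le_sup_left
    have hfmem : f ∈ Ideal.ofList (l ++ [f]) := Ideal.subset_span (by simp)
    rcases Fin.eq_castSucc_or_eq_last (Fin.cast hlen i) with ⟨j, hj⟩ | hj
    · have hci : c i = c (Fin.cast hlen.symm j.castSucc) := by
        congr 1
        rw [← hj]
        ext; simp
      rw [hci]
      have h' : c (Fin.cast hlen.symm j.castSucc)
          = (c (Fin.cast hlen.symm j.castSucc) + d j * f) - d j * f := by ring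
      rw [h']
      exact sub_mem (hsub (hin j)) (Ideal.mul_mem_left _ _ hfmem)
    · have hci : c i = clast := by
        rw [hclastdef]; congr 1; rw [← hj]; ext; simp
      rw [hci]
      exact hsub hclast


lemma le_single_cases {n : ℕ} {v : Fin n} {s : Fin n →₀ ℕ} (h : s ≤ Finsupp.single v 1) :
    s = 0 ∨ s = Finsupp.single v 1 := by
  have hle := Finsupp.le_def.mp h
  have hw0 : ∀ w, w ≠ v → s w = 0 := by
    intro w hw
    have := hle w
    rwa [Finsupp.single_eq_of_ne' (Ne.symm hw), Nat.le_zero] at this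
  have hrep : s = Finsupp.single v (s v) := by
    ext w
    rcases eq_or_ne w v with rfl | hw
    · rw [Finsupp.single_eq_same]
    · rw [Finsupp.single_eq_of_ne' (Ne.symm hw), hw0 w hw]
  have hv : s v ≤ 1 := by
    have := hle v
    rwa [Finsupp.single_eq_same] at this
  rcases Nat.le_one_iff_eq_zero_or_eq_one.mp hv with hv' | hv'
  · left; rw [hrep, hv', Finsupp.single_zero]
  · right; rw [hrep, hv']

lemma le_pair_cases {n : ℕ} {u v : Fin n} (huv : u ≠ v) {s : Fin n →₀ ℕ}
    (h : s ≤ Finsupp.single u 1 + Finsupp.single v 1) :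
    s = 0 ∨ s = Finsupp.single u 1 ∨ s = Finsupp.single v 1 ∨
      s = Finsupp.single u 1 + Finsupp.single v 1 := by
  have hle := Finsupp.le_def.mp h
  have hw0 : ∀ w, w ≠ u → w ≠ v → s w = 0 := by
    intro w h1 h2
    have := hle w
    rwa [Finsupp.add_apply, Finsupp.single_eq_of_ne' (Ne.symm h1),
      Finsupp.single_eq_of_ne' (Ne.symm h2), add_zero, Nat.le_zero] at this
  have hu : s u ≤ 1 := by
    have := hle u
    rwa [Finsupp.add_apply, Finsupp.single_eq_same,
      Finsupp.single_eq_of_ne' (Ne.symm huv), add_zero] at this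
  have hv : s v ≤ 1 := by
    have := hle v
    rwa [Finsupp.add_apply, Finsupp.single_eq_same,
      Finsupp.single_eq_of_ne' huv, zero_add] at this
  have hrep : s = Finsupp.single u (s u) + Finsupp.single v (s v) := by
    ext w
    rw [Finsupp.add_apply]
    rcases eq_or_ne w u with rfl | h1
    · rw [Finsupp.single_eq_same, Finsupp.single_eq_of_ne' (Ne.symm huv), add_zero]
    rcases eq_or_ne w v with rfl | h2
    · rw [Finsupp.single_eq_same, Finsupp.single_eq_of_ne' huv, zero_add]
    · rw [Finsupp.single_eq_of_ne' (Ne.symm h1), Finsupp.single_eq_of_ne' (Ne.symm h2),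
        hw0 w h1 h2, add_zero]
  rcases Nat.le_one_iff_eq_zero_or_eq_one.mp hu with hu' | hu' <;>
    rcases Nat.le_one_iff_eq_zero_or_eq_one.mp hv with hv' | hv'
  · left; rw [hrep, hu', hv', Finsupp.single_zero, Finsupp.single_zero, add_zero]
  · right; right; left; rw [hrep, hu', hv', Finsupp.single_zero, zero_add]
  · right; left; rw [hrep, hu', hv', Finsupp.single_zero, add_zero]
  · right; right; right; rw [hrep, hu', hv']

lemma monomial_ideal_not_CI {K : Type} [Field K] {n : ℕ} (E : Set (Fin n →₀ ℕ))
    {x₁ x₂ y : Fin n} (h12 : x₁ ≠ x₂) (h1y : x₁ ≠ y) (h2y : x₂ ≠ y)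
    {J : Ideal (MvPolynomial (Fin n) K)}
    (hJ : J = Ideal.span ((fun s => monomial s (1 : K)) '' E))
    (h1 : (1 : MvPolynomial (Fin n) K) ∉ J)
    (hX1 : (X x₁ : MvPolynomial (Fin n) K) ∉ J)
    (hX2 : (X x₂ : MvPolynomial (Fin n) K) ∉ J)
    (hY : (X y : MvPolynomial (Fin n) K) ∉ J)
    (hm1 : (X x₁ * X y : MvPolynomial (Fin n) K) ∈ J)
    (hm2 : (X x₂ * X y : MvPolynomial (Fin n) K) ∈ J) :
    ¬ IsCompleteIntersectionIdeal J := by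
  classical
  rintro ⟨rs, hreg, hspan⟩
  have hXdef : ∀ v : Fin n, (X v : MvPolynomial (Fin n) K)
      = monomial (Finsupp.single v 1) 1 := fun v => rfl
  have hmonJ : ∀ s ∈ E, (monomial s (1:K) : MvPolynomial (Fin n) K) ∈ J := fun s hs =>
    hJ ▸ Ideal.subset_span ⟨s, hs, rfl⟩
  have hmemJ_iff : ∀ g : MvPolynomial (Fin n) K, g ∈ J ↔ ∀ m ∈ g.support, ∃ s ∈ E, s ≤ m := by
    intro g; rw [hJ]; exact mem_ideal_span_monomial_image
  set T₂ : Set (Fin n →₀ ℕ) := {t | ∃ s ∈ E, s ≤ Finsupp.single x₂ 1 + t} with hT₂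
  set H : Ideal (MvPolynomial (Fin n) K) :=
    Ideal.span {(X x₁ : MvPolynomial (Fin n) K)} ⊔
      Ideal.span ((fun s => monomial s (1:K)) '' T₂) with hH
  have claim : ∀ p q : MvPolynomial (Fin n) K, (X x₂ * p - X x₁ * q) ∈ J → p ∈ H := by
    intro p q hpq
    rw [hH, p.as_sum]
    refine Ideal.sum_mem _ fun m hm => ?_
    by_cases hle : Finsupp.single x₁ 1 ≤ m
    · refine Ideal.mem_sup_left (Ideal.mem_span_singleton.mpr
        ⟨monomial (m - Finsupp.single x₁ 1) (coeff m p), ?_⟩)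
      rw [hXdef x₁, monomial_mul, one_mul, add_tsub_cancel_of_le hle]
    · have hmT₂ : m ∈ T₂ := by
        by_contra hnot
        have hcm : coeff (Finsupp.single x₂ 1 + m) (X x₂ * p - X x₁ * q) = 0 := by
          by_contra hc
          rcases (hmemJ_iff _).mp hpq _ (mem_support_iff.mpr hc) with ⟨s, hsE, hsle⟩
          exact hnot ⟨s, hsE, hsle⟩
        rw [coeff_sub, coeff_X_mul] at hcm
        have hq0 : coeff (Finsupp.single x₂ 1 + m) (X x₁ * q) = 0 := by
          rw [coeff_X_mul', if_neg]
          intro hmem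
          simp only [Finsupp.mem_support_iff, Finsupp.add_apply] at hmem
          have h2 : Finsupp.single x₂ 1 x₁ = 0 := Finsupp.single_eq_of_ne' (Ne.symm h12)
          have h3 : m x₁ = 0 := by
            by_contra h4
            exact hle (Finsupp.single_le_iff.mpr (Nat.one_le_iff_ne_zero.mpr h4))
          exact hmem (by simp [h2, h3])
        rw [hq0, sub_zero] at hcm
        exact (mem_support_iff.mp hm) hcm
      have hmm : (monomial m (1:K) : MvPolynomial (Fin n) K)
          ∈ Ideal.span ((fun s => monomial s (1:K)) '' T₂) :=
        Ideal.subset_span ⟨m, hmT₂, rfl⟩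
      have hmm' := Ideal.mul_mem_left _ (C (coeff m p)) hmm
      rw [C_mul_monomial, mul_one] at hmm'
      exact Ideal.mem_sup_right hmm'
  have hJrs : J = Ideal.span (Set.range rs.get) := by
    rw [hspan]; exact congrArg Ideal.span (Set.ext fun x => List.mem_iff_get)
  obtain ⟨a, ha⟩ := Ideal.mem_span_range_iff_exists_fun.mp (hJrs ▸ hm1)
  obtain ⟨b, hb⟩ := Ideal.mem_span_range_iff_exists_fun.mp (hJrs ▸ hm2)
  have hsyz : ∑ i, (X x₂ * a i - X x₁ * b i) * rs.get i = 0 := by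
    have heq : ∑ i, (X x₂ * a i - X x₁ * b i) * rs.get i
        = X x₂ * (∑ i, a i * rs.get i) - X x₁ * (∑ i, b i * rs.get i) := by
      rw [Finset.mul_sum, Finset.mul_sum, ← Finset.sum_sub_distrib]
      exact Finset.sum_congr rfl fun i _ => by ring
    rw [heq, ha, hb]; ring
  have hcoefs := syzygy_mem rs hreg.toIsWeaklyRegular _ hsyz
  have haH : ∀ i, a i ∈ H := fun i => claim _ _ (by
    rw [hspan]; exact hcoefs i)
  have hfJ : ∀ i : Fin rs.length, rs.get i ∈ J := fun i => by
    rw [hspan]; exact Ideal.subset_span (rs.get_mem i)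
  have hXXmem : (X x₁ * X y : MvPolynomial (Fin n) K) ∈ H * J := by
    rw [← ha]; exact Ideal.sum_mem _ fun i _ => Ideal.mul_mem_mul (haH i) (hfJ i)
  set TW : Set (Fin n →₀ ℕ) :=
    ((fun s => Finsupp.single x₁ 1 + s) '' E) ∪ (Set.image2 (· + ·) T₂ E) with hTW
  have hHJ : H * J ≤ Ideal.span ((fun s => monomial s (1:K)) '' TW) := by
    rw [hH, Ideal.sup_mul]
    apply sup_le
    · have h1' : Ideal.span {(X x₁ : MvPolynomial (Fin n) K)}
          = Ideal.span ((fun s => monomial s (1:K)) '' {Finsupp.single x₁ 1}) := by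
        rw [Set.image_singleton, hXdef x₁]
      rw [h1', hJ, Ideal.span_mul_span']
      apply Ideal.span_mono
      rintro w ⟨p, hp, q, hq, rfl⟩
      rcases hp with ⟨s₁, hs₁, rfl⟩
      rcases hq with ⟨s₂, hs₂, rfl⟩
      rcases Set.mem_singleton_iff.mp hs₁ with rfl
      exact ⟨_, Or.inl ⟨s₂, hs₂, rfl⟩, by simp [monomial_mul]⟩
    · rw [hJ, Ideal.span_mul_span']
      apply Ideal.span_mono
      rintro w ⟨p, hp, q, hq, rfl⟩
      rcases hp with ⟨t₂, ht₂, rfl⟩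
      rcases hq with ⟨s₂, hs₂, rfl⟩
      exact ⟨_, Or.inr ⟨t₂, ht₂, s₂, hs₂, rfl⟩, by simp [monomial_mul]⟩
  have hx1y : (X x₁ * X y : MvPolynomial (Fin n) K)
      = monomial (Finsupp.single x₁ 1 + Finsupp.single y 1) (1:K) := by
    rw [hXdef x₁, hXdef y, monomial_mul, one_mul]
  have hmem' : (monomial (Finsupp.single x₁ 1 + Finsupp.single y 1) (1:K) :
      MvPolynomial (Fin n) K) ∈ Ideal.span ((fun s => monomial s (1:K)) '' TW) := by
    rw [← hx1y]; exact hHJ hXXmem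
  obtain ⟨t, htTW, htle⟩ := mem_ideal_span_monomial_image.mp hmem' _ (by
    rw [support_monomial, if_neg one_ne_zero]; exact Finset.mem_singleton_self _)
  rcases htTW with ⟨s, hsE, rfl⟩ | ⟨t₂, ht₂, s, hsE, rfl⟩
  · have hsle : s ≤ Finsupp.single y 1 := by
      rw [Finsupp.le_def]; intro w
      have hw := Finsupp.le_def.mp htle w
      simp only [Finsupp.add_apply] at hw
      omega
    rcases le_single_cases hsle with rfl | rfl
    · exact h1 (by simpa using hmonJ _ hsE)
    · exact hY (hmonJ _ hsE)
  · have hsle : s ≤ Finsupp.single x₁ 1 + Finsupp.single y 1 := by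
      rw [Finsupp.le_def]; intro w
      have hw := Finsupp.le_def.mp htle w
      simp only [Finsupp.add_apply] at hw ⊢
      omega
    rcases le_pair_cases h1y hsle with rfl | rfl | rfl | rfl
    · exact h1 (by simpa using hmonJ _ hsE)
    · exact hX1 (hmonJ _ hsE)
    · exact hY (hmonJ _ hsE)
    · have ht0 : t₂ = 0 := by
        ext w
        have hw := Finsupp.le_def.mp htle w
        simp only [Finsupp.add_apply, Finsupp.coe_zero, Pi.zero_apply] at hw ⊢
        omega
      rcases ht₂ with ⟨s', hs'E, hs'le⟩
      rw [ht0, add_zero] at hs'le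
      rcases le_single_cases hs'le with rfl | rfl
      · exact h1 (by simpa using hmonJ _ hs'E)
      · exact hX2 (hmonJ _ hs'E)

lemma prod_X_eq_monomial' {K : Type} [Field K] {n : ℕ} (F : Finset (Fin n)) :
    (∏ i ∈ F, (X i : MvPolynomial (Fin n) K))
      = monomial (∑ i ∈ F, Finsupp.single i 1) 1 := by
  classical
  induction F using Finset.induction with
  | empty => simp [monomial_zero']
  | @insert a s h ih =>
    have hX : (X a : MvPolynomial (Fin n) K) = monomial (Finsupp.single a 1) 1 := rfl
    rw [Finset.prod_insert h, Finset.sum_insert h, ih, hX, monomial_mul, one_mul]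

lemma indsum_apply {n : ℕ} (F : Finset (Fin n)) (v : Fin n) :
    (∑ i ∈ F, Finsupp.single i (1:ℕ)) v = if v ∈ F then 1 else 0 := by
  classical
  rw [Finsupp.finset_sum_apply]
  simp [Finsupp.single_apply]

lemma srIdeal_eq_span {K : Type} [Field K] {n : ℕ} (Δ : SimComplex n) :
    srIdeal K Δ = Ideal.span ((fun s => monomial s (1:K)) ''
      {s | ∃ F : Finset (Fin n), F ∉ Δ.faces ∧ s = ∑ i ∈ F, Finsupp.single i 1}) := by
  unfold srIdeal
  congr 1
  ext m
  constructor
  · rintro ⟨F, hF, rfl⟩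
    exact ⟨_, ⟨F, hF, rfl⟩, (prod_X_eq_monomial' F).symm⟩
  · rintro ⟨s, ⟨F, hF, rfl⟩, rfl⟩
    exact ⟨F, hF, (prod_X_eq_monomial' F).symm⟩

lemma mem_srIdeal_of_nonface {K : Type} [Field K] {n : ℕ} (Δ : SimComplex n)
    {F : Finset (Fin n)} (hF : F ∉ Δ.faces) :
    (∏ i ∈ F, (X i : MvPolynomial (Fin n) K)) ∈ srIdeal K Δ :=
  Ideal.subset_span ⟨F, hF, rfl⟩

lemma not_mem_srIdeal_of_face {K : Type} [Field K] {n : ℕ} (Δ : SimComplex n)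
    {F : Finset (Fin n)} (hF : F ∈ Δ.faces) :
    (∏ i ∈ F, (X i : MvPolynomial (Fin n) K)) ∉ srIdeal K Δ := by
  classical
  intro hmem
  rw [srIdeal_eq_span, prod_X_eq_monomial'] at hmem
  obtain ⟨s, ⟨G, hG, rfl⟩, hle⟩ := mem_ideal_span_monomial_image.mp hmem _ (by
    rw [support_monomial, if_neg one_ne_zero]; exact Finset.mem_singleton_self _)
  have hGF : G ⊆ F := by
    intro v hv
    have hw := Finsupp.le_def.mp hle v
    rw [indsum_apply, indsum_apply, if_pos hv] at hw
    by_contra hvF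
    rw [if_neg hvF] at hw
    omega
  exact hG (Δ.down_closed hF hGF)

/-- **Lemma 1.7.** Let `Δ` be a locally complete intersection complex and
`x₁, x₂, y` distinct vertices with `X₁Y, X₂Y ∈ I_Δ`.  Then for every vertex
`z ∉ {x₁, x₂, y}` at least one of `X₁Z`, `X₂Z`, `YZ` lies in `I_Δ`. -/
theorem mem_srIdeal_of_locallyCI (K : Type) [Field K] {n : ℕ}
    (Δ : SimComplex n) (hfull : Δ.OnFullVertexSet) (hlci : LocallyCI K Δ)
    (x₁ x₂ y : Fin n) (h12 : x₁ ≠ x₂) (h1y : x₁ ≠ y) (h2y : x₂ ≠ y)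
    (hm1 : (X x₁ * X y : MvPolynomial (Fin n) K) ∈ srIdeal K Δ)
    (hm2 : (X x₂ * X y : MvPolynomial (Fin n) K) ∈ srIdeal K Δ)
    (z : Fin n) (hz1 : z ≠ x₁) (hz2 : z ≠ x₂) (hzy : z ≠ y) :
    (X x₁ * X z : MvPolynomial (Fin n) K) ∈ srIdeal K Δ ∨
    (X x₂ * X z : MvPolynomial (Fin n) K) ∈ srIdeal K Δ ∨
    (X y * X z : MvPolynomial (Fin n) K) ∈ srIdeal K Δ := by
  by_contra hcon
  push_neg at hcon
  obtain ⟨hc1, hc2, hc3⟩ := hcon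
  have hf1 : ({x₁, z} : Finset (Fin n)) ∈ Δ.faces := by
    by_contra hnf
    have := mem_srIdeal_of_nonface (K := K) Δ hnf
    rw [Finset.prod_pair (Ne.symm hz1)] at this
    exact hc1 this
  have hf2 : ({x₂, z} : Finset (Fin n)) ∈ Δ.faces := by
    by_contra hnf
    have := mem_srIdeal_of_nonface (K := K) Δ hnf
    rw [Finset.prod_pair (Ne.symm hz2)] at this
    exact hc2 this
  have hf3 : ({y, z} : Finset (Fin n)) ∈ Δ.faces := by
    by_contra hnf
    have := mem_srIdeal_of_nonface (K := K) Δ hnf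
    rw [Finset.prod_pair (Ne.symm hzy)] at this
    exact hc3 this
  have hn1 : ({x₁, y} : Finset (Fin n)) ∉ Δ.faces := by
    intro hface
    exact not_mem_srIdeal_of_face (K := K) Δ hface (by rw [Finset.prod_pair h1y]; exact hm1)
  have hn2 : ({x₂, y} : Finset (Fin n)) ∉ Δ.faces := by
    intro hface
    exact not_mem_srIdeal_of_face (K := K) Δ hface (by rw [Finset.prod_pair h2y]; exact hm2)
  have hz : ({z} : Finset (Fin n)) ∈ Δ.faces := hfull z
  set Γ := Δ.link {z} hz with hΓ
  have hciΓ : IsCompleteIntersectionIdeal (srIdeal K Γ) := hlci z hz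
  have hsingle : ∀ v : Fin n, v ≠ z → ({v, z} : Finset (Fin n)) ∈ Δ.faces →
      ({v} : Finset (Fin n)) ∈ Γ.faces := by
    intro v hv hface
    refine ⟨Finset.disjoint_singleton.mpr hv, ?_⟩
    rwa [← Finset.insert_eq]
  have hnfΓ : ∀ G : Finset (Fin n), G ∉ Δ.faces → G ∉ Γ.faces := by
    rintro G hG ⟨hdis, hun⟩
    exact hG (Δ.down_closed hun Finset.subset_union_left)
  refine monomial_ideal_not_CI (K := K)
    {s | ∃ F : Finset (Fin n), F ∉ Γ.faces ∧ s = ∑ i ∈ F, Finsupp.single i 1}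
    h12 h1y h2y (srIdeal_eq_span Γ) ?_ ?_ ?_ ?_ ?_ ?_ hciΓ
  · have := not_mem_srIdeal_of_face (K := K) Γ Γ.empty_mem
    rwa [Finset.prod_empty] at this
  · have := not_mem_srIdeal_of_face (K := K) Γ (hsingle x₁ (Ne.symm hz1) hf1)
    rwa [Finset.prod_singleton] at this
  · have := not_mem_srIdeal_of_face (K := K) Γ (hsingle x₂ (Ne.symm hz2) hf2)
    rwa [Finset.prod_singleton] at this
  · have := not_mem_srIdeal_of_face (K := K) Γ (hsingle y (Ne.symm hzy) hf3)
    rwa [Finset.prod_singleton] at this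
  · have := mem_srIdeal_of_nonface (K := K) Γ (hnfΓ _ hn1)
    rwa [Finset.prod_pair h1y] at this
  · have := mem_srIdeal_of_nonface (K := K) Γ (hnfΓ _ hn2)
    rwa [Finset.prod_pair h2y] at this
end

section
/- Let Δ be a connected locally complete intersection simplicial complex on V of dimension d−1 ≥ 1, and suppose there exist distinct vertices x_1, x_2, y with X_1Y, X_2Y ∈ I_Δ. Then there exist integers k, ℓ ≥ 2 and a labeling V = {x_1,…,x_k, y_1,…,y_ℓ} with y_1 = y such that: (i) X_iY_1 ∈ I_Δ for all i=1,…,k; (ii) Y_1Y_j ∉ I_Δ for all j=2,…,ℓ; and (iii) for each j=2,…,ℓ, at most one index i ∈ {1,…,k} satisfies X_iY_j ∉ I_Δ. -/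
open MvPolynomial

set_option synthInstance.maxHeartbeats 1000000
set_option maxHeartbeats 1000000

section KeyAux

open RingTheory.Sequence

variable {R : Type*} [CommRing R]

lemma kll_ideal_smul_top (I : Ideal R) : (I • (⊤ : Submodule R R) : Submodule R R) = I := by
  apply le_antisymm
  · refine Submodule.smul_le.mpr ?_
    intro r hr m _
    simpa [smul_eq_mul] using Ideal.mul_mem_right m I hr
  · intro x hx
    simpa using Submodule.smul_mem_smul hx (Submodule.mem_top (x := (1 : R)))

lemma kll_mem_ofList_iff {l : List R} {x : R} :
    x ∈ Ideal.ofList l ↔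
      ∃ v : ℕ → R, x = ∑ i ∈ Finset.range l.length, v i * l.getD i 0 := by
  constructor
  · intro hx
    have hset : {r : R | r ∈ l} = Set.range (fun i : Fin l.length => l.get i) := by
      ext r
      simp [List.mem_iff_get, eq_comm]
    rw [Ideal.ofList, hset] at hx
    obtain ⟨c, hc⟩ := (Submodule.mem_span_range_iff_exists_fun R).mp hx
    refine ⟨fun i => if h : i < l.length then c ⟨i, h⟩ else 0, ?_⟩
    rw [← hc]
    rw [← Fin.sum_univ_eq_sum_range
      (fun i : ℕ => (if h : i < l.length then c ⟨i, h⟩ else 0) * l.getD i 0)]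
    apply Finset.sum_congr rfl
    intro i _
    rw [dif_pos i.isLt, List.getD_eq_getElem l 0 i.isLt, smul_eq_mul]
    rfl
  · rintro ⟨v, rfl⟩
    refine Ideal.sum_mem _ fun j hj => ?_
    have hm := Finset.mem_range.mp hj
    rw [List.getD_eq_getElem l 0 hm]
    exact Ideal.mul_mem_left _ _ (Ideal.subset_span (List.getElem_mem _))

lemma kll_syzygy (l : List R) (hreg : IsWeaklyRegular R l) (g : ℕ → R)
    (hsum : ∑ i ∈ Finset.range l.length, g i * l.getD i 0 = 0) :
    ∀ i < l.length, g i ∈ Ideal.ofList l := by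
  induction l using List.reverseRecOn generalizing g with
  | nil => intro i hi; simp at hi
  | append_singleton l r ih =>
    rw [isWeaklyRegular_append_iff] at hreg
    obtain ⟨hregl, hregr⟩ := hreg
    rw [isWeaklyRegular_singleton_iff] at hregr
    have hlen : (l ++ [r]).length = l.length + 1 := by simp
    rw [hlen, Finset.sum_range_succ] at hsum
    have hget : ∀ j < l.length, (l ++ [r]).getD j 0 = l.getD j 0 := by
      intro j hj
      rw [List.getD_eq_getElem?_getD, List.getD_eq_getElem?_getD,
        List.getElem?_append_left hj]
    have hgetr : (l ++ [r]).getD l.length 0 = r := by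
      rw [List.getD_eq_getElem?_getD, List.getElem?_append_right (le_refl _)]
      simp
    rw [hgetr] at hsum
    rw [Finset.sum_congr rfl fun j hj => by
      rw [hget j (Finset.mem_range.mp hj)]] at hsum
    have hsum' : (∑ i ∈ Finset.range l.length, g i * l.getD i 0) + g l.length * r = 0 :=
      hsum
    have hmemJ : ∀ j ∈ Finset.range l.length, g j * l.getD j 0 ∈ Ideal.ofList l := by
      intro j hj
      have hm := Finset.mem_range.mp hj
      rw [List.getD_eq_getElem l 0 hm]
      exact Ideal.mul_mem_left _ _ (Ideal.subset_span (List.getElem_mem _))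
    have hmul : g l.length * r ∈ Ideal.ofList l := by
      have h1 : g l.length * r = -∑ i ∈ Finset.range l.length, g i * l.getD i 0 := by
        rw [eq_neg_iff_add_eq_zero, add_comm]
        exact hsum'
      rw [h1]
      exact neg_mem (Ideal.sum_mem _ hmemJ)
    have hq : g l.length ∈ Ideal.ofList l := by
      have h0 : r • (Submodule.Quotient.mk (g l.length) :
          R ⧸ (Ideal.ofList l • ⊤ : Submodule R R)) = r • (0 : _) := by
        rw [smul_zero, ← Submodule.Quotient.mk_smul, Submodule.Quotient.mk_eq_zero,
          kll_ideal_smul_top]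
        simpa [smul_eq_mul, mul_comm] using hmul
      have := hregr h0
      rwa [Submodule.Quotient.mk_eq_zero, kll_ideal_smul_top] at this
    obtain ⟨v, hv⟩ := kll_mem_ofList_iff.mp hq
    have hsum'' : ∑ i ∈ Finset.range l.length, (g i + v i * r) * l.getD i 0 = 0 := by
      have : ∑ i ∈ Finset.range l.length, (g i + v i * r) * l.getD i 0 =
          (∑ i ∈ Finset.range l.length, g i * l.getD i 0) +
            (∑ i ∈ Finset.range l.length, v i * l.getD i 0) * r := by
        rw [Finset.sum_mul, ← Finset.sum_add_distrib]
        exact Finset.sum_congr rfl fun j _ => by ring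
      rw [this, ← hv]
      exact hsum'
    have hIH := ih hregl _ hsum''
    have hle : Ideal.ofList l ≤ Ideal.ofList (l ++ [r]) := by
      rw [Ideal.ofList_append]
      exact le_sup_left
    have hrmem : r ∈ Ideal.ofList (l ++ [r]) := Ideal.subset_span (by simp)
    intro i hi
    rw [hlen] at hi
    rcases Nat.lt_succ_iff_lt_or_eq.mp hi with h | h
    · have : g i = (g i + v i * r) - v i * r := by ring
      rw [this]
      exact sub_mem (hle (hIH i h)) (Ideal.mul_mem_left _ _ hrmem)
    · rw [h]
      exact hle hq

end KeyAux


section KeyAux2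

variable (K : Type*) [Field K] {n : ℕ}

/-- Exponent vector of a squarefree monomial. -/
noncomputable def kllExp (F : Finset (Fin n)) : Fin n →₀ ℕ :=
  ∑ i ∈ F, Finsupp.single i 1

lemma kllExp_apply (F : Finset (Fin n)) (j : Fin n) :
    kllExp F j = if j ∈ F then 1 else 0 := by
  classical
  rw [kllExp, Finset.sum_apply']
  rw [Finset.sum_congr rfl (fun i _ => Finsupp.single_apply)]
  exact Finset.sum_ite_eq' F j (fun _ => 1)

lemma kll_subset_of_le {F G : Finset (Fin n)} (h : kllExp F ≤ kllExp G) : F ⊆ G := by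
  intro i hi
  have h1 := h i
  rw [kllExp_apply, kllExp_apply, if_pos hi] at h1
  by_contra hG
  rw [if_neg hG] at h1
  omega

lemma kll_prod_X (F : Finset (Fin n)) :
    (∏ i ∈ F, X i : MvPolynomial (Fin n) K) = monomial (kllExp F) 1 := by
  classical
  induction F using Finset.induction_on with
  | empty => simp [kllExp]
  | @insert a s ha ih =>
    have hexp : kllExp (insert a s) = Finsupp.single a 1 + kllExp s := by
      rw [kllExp, kllExp, Finset.sum_insert ha]
    rw [Finset.prod_insert ha, ih, hexp, MvPolynomial.X,
      MvPolynomial.monomial_mul, one_mul]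

lemma kll_srIdeal_eq (Γ : SimComplex n) :
    srIdeal K Γ = Ideal.span ((fun s => monomial s (1 : K)) ''
      {s | ∃ F, F ∉ Γ.faces ∧ s = kllExp F}) := by
  unfold srIdeal
  congr 1
  ext m
  constructor
  · rintro ⟨F, hF, rfl⟩
    exact ⟨kllExp F, ⟨F, hF, rfl⟩, (kll_prod_X K F).symm⟩
  · rintro ⟨s, ⟨F, hF, rfl⟩, rfl⟩
    exact ⟨F, hF, (kll_prod_X K F).symm⟩

lemma kll_support (Γ : SimComplex n) {g : MvPolynomial (Fin n) K}
    (hg : g ∈ srIdeal K Γ) {u : Fin n →₀ ℕ} (hu : u ∈ g.support) :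
    ∃ F, F ∉ Γ.faces ∧ kllExp F ≤ u := by
  rw [kll_srIdeal_eq] at hg
  obtain ⟨s, ⟨F, hF, rfl⟩, hle⟩ := mem_ideal_span_monomial_image.mp hg u hu
  exact ⟨F, hF, hle⟩

lemma kll_coeff_single_eq_zero (Γ : SimComplex n) {c : Fin n}
    (hc : ({c} : Finset (Fin n)) ∈ Γ.faces) {g : MvPolynomial (Fin n) K}
    (hg : g ∈ srIdeal K Γ) :
    MvPolynomial.coeff (Finsupp.single c 1) g = 0 := by
  by_contra h
  obtain ⟨F, hF, hle⟩ := kll_support K Γ hg (MvPolynomial.mem_support_iff.mpr h)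
  have hsub : F ⊆ {c} := by
    intro i hi
    have h1 := hle i
    rw [kllExp_apply, if_pos hi, Finsupp.single_apply] at h1
    rw [Finset.mem_singleton]
    by_contra hne
    rw [if_neg (fun hcc => hne hcc.symm)] at h1
    omega
  exact hF (Γ.down_closed hc hsub)

lemma kll_coeff_pair_mul (Γ : SimComplex n) {a b : Fin n} (hab : a ≠ b)
    (ha : ({a} : Finset (Fin n)) ∈ Γ.faces) (hb : ({b} : Finset (Fin n)) ∈ Γ.faces)
    {r : MvPolynomial (Fin n) K} (hr : r ∈ srIdeal K Γ)
    (f : MvPolynomial (Fin n) K) :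
    MvPolynomial.coeff (kllExp {a, b}) (f * r) =
      MvPolynomial.coeff 0 f * MvPolynomial.coeff (kllExp {a, b}) r := by
  classical
  rw [MvPolynomial.coeff_mul]
  apply Finset.sum_eq_single (0, kllExp {a, b})
  · rintro ⟨u, v⟩ huv hne
    rw [Finset.HasAntidiagonal.mem_antidiagonal] at huv
    by_cases hv : MvPolynomial.coeff v r = 0
    · simp [hv]
    obtain ⟨F, hF, hle⟩ := kll_support K Γ hr (MvPolynomial.mem_support_iff.mpr hv)
    have hvle : v ≤ kllExp {a, b} := huv ▸ le_add_self
    have hFsub : F ⊆ ({a, b} : Finset (Fin n)) := kll_subset_of_le (hle.trans hvle)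
    have hsingle : ∀ d : Fin n, ({d} : Finset (Fin n)) ∈ Γ.faces → F ⊆ {d} → False := by
      intro d hd hFd
      rcases Finset.subset_singleton_iff.mp hFd with h | h
      · exact hF (h ▸ Γ.empty_mem)
      · exact hF (h ▸ hd)
    have haF : a ∈ F := by
      by_contra haF
      refine hsingle b hb ?_
      intro i hi
      have := hFsub hi
      rw [Finset.mem_insert, Finset.mem_singleton] at this
      rcases this with h | h
      · exact absurd (h ▸ hi) haF
      · simpa using h
    have hbF : b ∈ F := by
      by_contra hbF
      refine hsingle a ha ?_
      intro i hi
      have := hFsub hi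
      rw [Finset.mem_insert, Finset.mem_singleton] at this
      rcases this with h | h
      · simpa using h
      · exact absurd (h ▸ hi) hbF
    have hFeq : F = ({a, b} : Finset (Fin n)) := by
      apply Finset.Subset.antisymm hFsub
      intro i hi
      rw [Finset.mem_insert, Finset.mem_singleton] at hi
      rcases hi with h | h
      · exact h ▸ haF
      · exact h ▸ hbF
    have hveq : v = kllExp {a, b} := le_antisymm hvle (hFeq ▸ hle)
    have hueq : u = 0 := by
      rw [hveq] at huv
      exact add_eq_right.mp huv
    exact absurd (Prod.ext hueq hveq) hne
  · intro h
    exact absurd (Finset.HasAntidiagonal.mem_antidiagonal.mpr (zero_add _)) h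

lemma kll_pair_mem (Γ : SimComplex n) {u v : Fin n} (huv : u ≠ v)
    (h : ({u, v} : Finset (Fin n)) ∉ Γ.faces) :
    (X u * X v : MvPolynomial (Fin n) K) ∈ srIdeal K Γ := by
  apply Ideal.subset_span
  exact ⟨{u, v}, h, (Finset.prod_pair huv).symm⟩

lemma kll_pair_mem_iff (Γ : SimComplex n) (hfull : Γ.OnFullVertexSet)
    {u v : Fin n} (huv : u ≠ v) :
    (X u * X v : MvPolynomial (Fin n) K) ∈ srIdeal K Γ ↔
      ({u, v} : Finset (Fin n)) ∉ Γ.faces := by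
  refine ⟨fun h hmem => ?_, kll_pair_mem K Γ huv⟩
  have hXX : (X u * X v : MvPolynomial (Fin n) K) = monomial (kllExp {u, v}) 1 := by
    rw [← Finset.prod_pair huv, kll_prod_X]
  have hsupp : kllExp {u, v} ∈ (X u * X v : MvPolynomial (Fin n) K).support := by
    rw [MvPolynomial.mem_support_iff, hXX, MvPolynomial.coeff_monomial, if_pos rfl]
    exact one_ne_zero
  obtain ⟨F, hF, hle⟩ := kll_support K Γ h hsupp
  exact hF (Γ.down_closed hmem (kll_subset_of_le hle))

end KeyAux2


section KeyAux3

variable (K : Type*) [Field K] {n : ℕ}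

/-- The key algebraic fact: if two degree-2 minimal nonfaces share a vertex,
the Stanley–Reisner ideal is not a complete intersection. -/
lemma kll_not_CI (Γ : SimComplex n) (a b c : Fin n)
    (hab : a ≠ b) (hac : a ≠ c) (hbc : b ≠ c)
    (ha : ({a} : Finset (Fin n)) ∈ Γ.faces) (hb : ({b} : Finset (Fin n)) ∈ Γ.faces)
    (hc : ({c} : Finset (Fin n)) ∈ Γ.faces)
    (hnab : ({a, b} : Finset (Fin n)) ∉ Γ.faces)
    (hnac : ({a, c} : Finset (Fin n)) ∉ Γ.faces) :
    ¬ IsCompleteIntersectionIdeal (srIdeal K Γ) := by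
  classical
  rintro ⟨rs, hreg, hspan⟩
  have hab' : (X a * X b : MvPolynomial (Fin n) K) ∈ srIdeal K Γ :=
    kll_pair_mem K Γ hab hnab
  have hac' : (X a * X c : MvPolynomial (Fin n) K) ∈ srIdeal K Γ :=
    kll_pair_mem K Γ hac hnac
  have hI : srIdeal K Γ = Ideal.ofList rs := hspan
  obtain ⟨f, hf⟩ := kll_mem_ofList_iff.mp (hI ▸ hab')
  obtain ⟨h, hh⟩ := kll_mem_ofList_iff.mp (hI ▸ hac')
  set m := rs.length with hm
  set g : ℕ → MvPolynomial (Fin n) K := fun i => X c * f i - X b * h i with hg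
  have hsyz : ∑ i ∈ Finset.range m, g i * rs.getD i 0 = 0 := by
    have heq : ∑ i ∈ Finset.range m, g i * rs.getD i 0 =
        X c * ∑ i ∈ Finset.range m, f i * rs.getD i 0
          - X b * ∑ i ∈ Finset.range m, h i * rs.getD i 0 := by
      rw [Finset.mul_sum, Finset.mul_sum, ← Finset.sum_sub_distrib]
      exact Finset.sum_congr rfl fun i _ => by rw [hg]; ring
    rw [heq, ← hf, ← hh]
    ring
  have hgmem : ∀ i < m, g i ∈ srIdeal K Γ := by
    intro i hi
    rw [hI]
    exact kll_syzygy rs hreg.toIsWeaklyRegular g hsyz i hi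
  have hf0 : ∀ i < m, MvPolynomial.coeff 0 (f i) = 0 := by
    intro i hi
    have h1 := kll_coeff_single_eq_zero K Γ hc (hgmem i hi)
    rw [hg, MvPolynomial.coeff_sub] at h1
    have h2 : MvPolynomial.coeff (Finsupp.single c 1) (X c * f i) =
        MvPolynomial.coeff 0 (f i) := by
      rw [MvPolynomial.coeff_X_mul', if_pos (by simp)]
      congr 1
      simp
    have h3 : MvPolynomial.coeff (Finsupp.single c 1) (X b * h i) = 0 := by
      rw [MvPolynomial.coeff_X_mul', if_neg]
      simp [Finsupp.single_apply, Ne.symm hbc, hbc]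
    rw [h2, h3, sub_zero] at h1
    exact h1
  have hrsmem : ∀ i < m, rs.getD i 0 ∈ srIdeal K Γ := by
    intro i hi
    rw [hI, List.getD_eq_getElem rs 0 hi]
    exact Ideal.subset_span (List.getElem_mem _)
  have hcoe : (1 : K) = ∑ i ∈ Finset.range m,
      MvPolynomial.coeff 0 (f i) * MvPolynomial.coeff (kllExp {a, b}) (rs.getD i 0) := by
    have h0 : MvPolynomial.coeff (kllExp {a, b}) (X a * X b : MvPolynomial (Fin n) K) = 1 := by
      rw [← Finset.prod_pair hab, kll_prod_X, MvPolynomial.coeff_monomial, if_pos rfl]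
    rw [← h0, hf, MvPolynomial.coeff_sum]
    exact Finset.sum_congr rfl fun i hi =>
      kll_coeff_pair_mul K Γ hab ha hb (hrsmem i (Finset.mem_range.mp hi)) (f i)
  have hzero : (1 : K) = 0 := by
    rw [hcoe]
    apply Finset.sum_eq_zero
    intro i hi
    rw [hf0 i (Finset.mem_range.mp hi), zero_mul]
  exact one_ne_zero hzero

end KeyAux3

/-- **Lemma 1.8 (Key Lemma).** Let `Δ` be a connected locally complete
intersection complex of dimension `d - 1 ≥ 1` having distinct vertices
`x₁, x₂, y` with `X₁Y, X₂Y ∈ I_Δ`.  Then the vertex set can be labeled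
`V = {x_1, …, x_k, y_1, …, y_ℓ}` (with `k, ℓ ≥ 2` and `y₁ = y`) so that
`X_iY_1 ∈ I_Δ` for all `i`, `Y_1Y_j ∉ I_Δ` for `j ≥ 2`, and for each `j ≥ 2`
at most one index `i` satisfies `X_iY_j ∉ I_Δ`. -/
theorem key_labeling_lemma (K : Type) [Field K] {n : ℕ} (Δ : SimComplex n)
    (hfull : Δ.OnFullVertexSet) (hconn : Δ.Connected) (hdim : 1 ≤ Δ.dim)
    (hlci : LocallyCI K Δ) (x₁ x₂ y : Fin n)
    (h12 : x₁ ≠ x₂) (h1y : x₁ ≠ y) (h2y : x₂ ≠ y)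
    (hm1 : (X x₁ * X y : MvPolynomial (Fin n) K) ∈ srIdeal K Δ)
    (hm2 : (X x₂ * X y : MvPolynomial (Fin n) K) ∈ srIdeal K Δ) :
    ∃ (k ℓ : ℕ) (xs : Fin (k + 2) → Fin n) (ys : Fin (ℓ + 2) → Fin n),
      Function.Injective xs ∧ Function.Injective ys ∧
      (∀ i j, xs i ≠ ys j) ∧
      (Set.range xs ∪ Set.range ys = Set.univ) ∧
      ys 0 = y ∧
      (∀ i, (X (xs i) * X (ys 0) : MvPolynomial (Fin n) K) ∈ srIdeal K Δ) ∧
      (∀ j : Fin (ℓ + 2), j ≠ 0 →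
        (X (ys 0) * X (ys j) : MvPolynomial (Fin n) K) ∉ srIdeal K Δ) ∧
      (∀ j : Fin (ℓ + 2), j ≠ 0 →
        {i : Fin (k + 2) |
          (X (xs i) * X (ys j) : MvPolynomial (Fin n) K) ∉ srIdeal K Δ}.Subsingleton) := by
  classical
  set Xs : Finset (Fin n) :=
    Finset.univ.filter (fun v => ({y, v} : Finset (Fin n)) ∉ Δ.faces) with hXsdef
  have hmemXs : ∀ v, v ∈ Xs ↔ ({y, v} : Finset (Fin n)) ∉ Δ.faces := by
    intro v
    simp [hXsdef]
  have hyXs : y ∉ Xs := fun hmem => (hmemXs y).mp hmem (by simpa using hfull y)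
  have hx1Xs : x₁ ∈ Xs := by
    rw [hmemXs, Finset.pair_comm]
    exact (kll_pair_mem_iff K Δ hfull h1y).mp hm1
  have hx2Xs : x₂ ∈ Xs := by
    rw [hmemXs, Finset.pair_comm]
    exact (kll_pair_mem_iff K Δ hfull h2y).mp hm2
  set Ys : Finset (Fin n) := Xsᶜ with hYsdef
  have hmemYs : ∀ v, v ∈ Ys ↔ ({y, v} : Finset (Fin n)) ∈ Δ.faces := by
    intro v
    rw [hYsdef, Finset.mem_compl, hmemXs, not_not]
  have hyYs : y ∈ Ys := Finset.mem_compl.mpr hyXs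
  have hvert : Δ.vertices = Set.univ :=
    Set.eq_univ_of_forall (fun v => hfull v)
  have hYs2 : ∃ z ∈ Ys, z ≠ y := by
    by_contra hcon
    push_neg at hcon
    apply hconn
    refine ⟨{y}, {v | v ≠ y}, ⟨y, rfl⟩, ⟨x₁, h1y⟩, ?_, ?_, ?_⟩
    · rw [Set.disjoint_left]
      rintro v hv hv2
      rw [Set.mem_singleton_iff] at hv
      exact hv2 hv
    · rw [hvert]
      ext v
      by_cases hv : v = y <;> simp [hv]
    · intro F hF
      by_cases hyF : y ∈ F
      · left
        intro v hv
        rw [Set.mem_singleton_iff]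
        by_contra hvy
        have hvF : v ∈ F := hv
        have hpair : ({y, v} : Finset (Fin n)) ⊆ F := by
          intro w hw
          rw [Finset.mem_insert, Finset.mem_singleton] at hw
          rcases hw with rfl | rfl
          · exact hyF
          · exact hvF
        have hface : ({y, v} : Finset (Fin n)) ∈ Δ.faces := Δ.down_closed hF hpair
        exact hvy (hcon v ((hmemYs v).mpr hface))
      · right
        intro v hv
        have hvF : v ∈ F := hv
        exact fun (h : v = y) => hyF (h ▸ hvF)
  obtain ⟨z₀, hz₀Ys, hz₀y⟩ := hYs2
  have hcardX : 2 ≤ Xs.card := Finset.one_lt_card.mpr ⟨x₁, hx1Xs, x₂, hx2Xs, h12⟩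
  have hcardY : 2 ≤ Ys.card := Finset.one_lt_card.mpr ⟨z₀, hz₀Ys, y, hyYs, hz₀y⟩
  obtain ⟨k, hk⟩ : ∃ k, Xs.card = k + 2 := ⟨Xs.card - 2, by omega⟩
  obtain ⟨ℓ, hℓ⟩ : ∃ ℓ, Ys.card = ℓ + 2 := ⟨Ys.card - 2, by omega⟩
  set eX : Fin (k + 2) ≃ {v // v ∈ Xs} := (Xs.equivFin.trans (finCongr hk)).symm with heX
  set eY0 : {v // v ∈ Ys} ≃ Fin (ℓ + 2) := Ys.equivFin.trans (finCongr hℓ) with heY0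
  set eY : Fin (ℓ + 2) ≃ {v // v ∈ Ys} :=
    (Equiv.swap 0 (eY0 ⟨y, hyYs⟩)).trans eY0.symm with heY
  set xs : Fin (k + 2) → Fin n := fun i => (eX i : Fin n) with hxs
  set ys : Fin (ℓ + 2) → Fin n := fun j => (eY j : Fin n) with hys
  have hxsXs : ∀ i, xs i ∈ Xs := fun i => (eX i).2
  have hysYs : ∀ j, ys j ∈ Ys := fun j => (eY j).2
  have hxsinj : Function.Injective xs := fun i j hij => eX.injective (Subtype.ext hij)
  have hysinj : Function.Injective ys := fun i j hij => eY.injective (Subtype.ext hij)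
  have hy0 : ys 0 = y := by
    rw [hys]
    simp [heY, Equiv.swap_apply_left]
  refine ⟨k, ℓ, xs, ys, hxsinj, hysinj, ?_, ?_, hy0, ?_, ?_, ?_⟩
  · intro i j hij
    have h1 := hxsXs i
    rw [hij] at h1
    exact (Finset.mem_compl.mp (hysYs j)) h1
  · apply Set.eq_univ_of_forall
    intro v
    by_cases hv : v ∈ Xs
    · exact Or.inl ⟨eX.symm ⟨v, hv⟩, by rw [hxs]; simp⟩
    · exact Or.inr ⟨eY.symm ⟨v, Finset.mem_compl.mpr hv⟩, by rw [hys]; simp⟩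
  · intro i
    rw [hy0]
    have h1 := (hmemXs _).mp (hxsXs i)
    have hne : xs i ≠ y := fun h => hyXs (h ▸ hxsXs i)
    rw [Finset.pair_comm] at h1
    exact kll_pair_mem K Δ hne h1
  · intro j hj hmem
    have hne : ys 0 ≠ ys j := fun h => hj (hysinj h).symm
    have h1 := (kll_pair_mem_iff K Δ hfull hne).mp hmem
    rw [hy0] at h1
    exact h1 ((hmemYs _).mp (hysYs j))
  · intro j hj p hp q hq
    by_contra hpq
    set z := ys j with hz
    have hzy : z ≠ y := by
      rw [← hy0]
      exact fun h => hj (hysinj h)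
    have hyz : ({y, z} : Finset (Fin n)) ∈ Δ.faces := (hmemYs z).mp (hysYs j)
    set b := xs p with hbdef
    set c := xs q with hcdef
    have hbc : b ≠ c := fun h => hpq (hxsinj h)
    have hbz : b ≠ z := fun h =>
      (Finset.mem_compl.mp (hysYs j)) ((congrArg (· ∈ Xs) h).mp (hxsXs p))
    have hcz : c ≠ z := fun h =>
      (Finset.mem_compl.mp (hysYs j)) ((congrArg (· ∈ Xs) h).mp (hxsXs q))
    have hyb : y ≠ b := fun h => hyXs (h ▸ hxsXs p)
    have hyc : y ≠ c := fun h => hyXs (h ▸ hxsXs q)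
    have hbzface : ({b, z} : Finset (Fin n)) ∈ Δ.faces := by
      by_contra hcon
      exact hp (kll_pair_mem K Δ hbz hcon)
    have hczface : ({c, z} : Finset (Fin n)) ∈ Δ.faces := by
      by_contra hcon
      exact hq (kll_pair_mem K Δ hcz hcon)
    have hzface := hfull z
    set Γ := Δ.link {z} hzface with hΓ
    have hsing : ∀ w : Fin n, w ≠ z → ({w, z} : Finset (Fin n)) ∈ Δ.faces →
        ({w} : Finset (Fin n)) ∈ Γ.faces := by
      intro w hw hface
      refine ⟨by rwa [Finset.disjoint_singleton], ?_⟩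
      have hun : ({w} : Finset (Fin n)) ∪ {z} = ({w, z} : Finset (Fin n)) := rfl
      rw [hun]
      exact hface
    have hyΓ : ({y} : Finset (Fin n)) ∈ Γ.faces := hsing y (Ne.symm hzy) hyz
    have hbΓ : ({b} : Finset (Fin n)) ∈ Γ.faces := hsing b hbz hbzface
    have hcΓ : ({c} : Finset (Fin n)) ∈ Γ.faces := hsing c hcz hczface
    have hnyb : ({y, b} : Finset (Fin n)) ∉ Γ.faces := by
      rintro ⟨hdis, hun⟩
      have hsub : ({y, b} : Finset (Fin n)) ⊆ {y, b} ∪ {z} := Finset.subset_union_left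
      exact ((hmemXs b).mp (hxsXs p)) (Δ.down_closed hun hsub)
    have hnyc : ({y, c} : Finset (Fin n)) ∉ Γ.faces := by
      rintro ⟨hdis, hun⟩
      have hsub : ({y, c} : Finset (Fin n)) ⊆ {y, c} ∪ {z} := Finset.subset_union_left
      exact ((hmemXs c).mp (hxsXs q)) (Δ.down_closed hun hsub)
    exact kll_not_CI K Γ y b c hyb hyc hbc hyΓ hbΓ hcΓ hnyb hnyc (hlci z hzface)
end

section
/- Let V = V_1 ∪ V_2 with V_1 ∩ V_2 = ∅, and let Δ_i be a simplicial complex on V_i for i=1,2. If Δ_1 and Δ_2 are both locally complete intersection complexes, then their disjoint union Δ_1 ∪ Δ_2 (a simplicial complex on V) is a locally complete intersection complex. Moreover, writing K[Δ_1]=K[X_1,…,X_m]/I_{Δ_1} and K[Δ_2]=K[Y_1,…,Y_n]/I_{Δ_2}, one has K[Δ_1 ∪ Δ_2] ≅ K[X_1,…,X_m,Y_1,…,Y_n]/(I_{Δ_1}, I_{Δ_2}, {X_iY_j : 1 ≤ i ≤ m, 1 ≤ j ≤ n}). -/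
open MvPolynomial

set_option synthInstance.maxHeartbeats 1000000
set_option maxHeartbeats 1000000

lemma SimComplex.ext' {n : ℕ} {Δ Γ : SimComplex n} (h : Δ.faces = Γ.faces) :
    Δ = Γ := by
  cases Δ; cases Γ; cases h; rfl

/-- **Lemma 1.16.** If `Δ₁`, `Δ₂` are locally complete intersection complexes
on disjoint vertex sets `V₁`, `V₂` with `V = V₁ ∪ V₂`, then their disjoint
union is a locally complete intersection complex; moreover
`K[Δ₁ ∪ Δ₂] ≅ K[X,Y]/(I_{Δ₁}, I_{Δ₂}, {XᵢYⱼ})`. -/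
theorem locallyCI_union_of_disjoint (K : Type) [Field K] {N : ℕ}
    (Δ₁ Δ₂ : SimComplex N)
    (hdisj : Disjoint Δ₁.vertices Δ₂.vertices)
    (hcover : Δ₁.vertices ∪ Δ₂.vertices = Set.univ)
    (h1 : LocallyCI K Δ₁) (h2 : LocallyCI K Δ₂) :
    LocallyCI K (Δ₁.union Δ₂) ∧
      Nonempty ((MvPolynomial (Fin N) K ⧸ srIdeal K (Δ₁.union Δ₂)) ≃ₐ[K]
        (MvPolynomial (Fin N) K ⧸
          (relSRIdeal K Δ₁ ⊔ relSRIdeal K Δ₂ ⊔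
            Ideal.span {m | ∃ i ∈ Δ₁.vertices, ∃ j ∈ Δ₂.vertices,
              m = X i * X j}))) := by
  have hdisj' : ∀ v : Fin N, v ∈ Δ₁.vertices → v ∈ Δ₂.vertices → False := by
    intro v hv1 hv2
    exact Set.disjoint_left.mp hdisj hv1 hv2
  constructor
  · -- LocallyCI
    intro v h
    rcases h with h | h
    · have hfaces : ((Δ₁.union Δ₂).link {v} (Or.inl h)).faces
          = (Δ₁.link {v} h).faces := by
        ext G
        simp only [SimComplex.link, SimComplex.union, Set.mem_setOf_eq,
          Set.mem_union]
        constructor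
        · rintro ⟨hd, h1 | h2⟩
          · exact ⟨hd, h1⟩
          · exfalso
            have hv2 : ({v} : Finset (Fin N)) ∈ Δ₂.faces :=
              Δ₂.down_closed h2 (Finset.subset_union_right)
            exact hdisj' v h hv2
        · rintro ⟨hd, h1⟩
          exact ⟨hd, Or.inl h1⟩
      have := SimComplex.ext' hfaces
      rw [show ((Δ₁.union Δ₂).link {v} (Or.inl h) : SimComplex N)
            = Δ₁.link {v} h from this]
      exact h1 v h
    · have hfaces : ((Δ₁.union Δ₂).link {v} (Or.inr h)).faces
          = (Δ₂.link {v} h).faces := by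
        ext G
        simp only [SimComplex.link, SimComplex.union, Set.mem_setOf_eq,
          Set.mem_union]
        constructor
        · rintro ⟨hd, h1 | h2⟩
          · exfalso
            have hv1 : ({v} : Finset (Fin N)) ∈ Δ₁.faces :=
              Δ₁.down_closed h1 (Finset.subset_union_right)
            exact hdisj' v hv1 h
          · exact ⟨hd, h2⟩
        · rintro ⟨hd, h2⟩
          exact ⟨hd, Or.inr h2⟩
      have := SimComplex.ext' hfaces
      rw [show ((Δ₁.union Δ₂).link {v} (Or.inr h) : SimComplex N)
            = Δ₂.link {v} h from this]
      exact h2 v h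
  · -- ideal equality and the isomorphism
    have hIdeq : srIdeal K (Δ₁.union Δ₂)
        = relSRIdeal K Δ₁ ⊔ relSRIdeal K Δ₂ ⊔
            Ideal.span {m | ∃ i ∈ Δ₁.vertices, ∃ j ∈ Δ₂.vertices,
              m = X i * X j} := by
      apply le_antisymm
      · rw [srIdeal, Ideal.span_le]
        rintro m ⟨F, hF, rfl⟩
        have hF12 : F ∉ Δ₁.faces ∧ F ∉ Δ₂.faces := by
          constructor <;> intro hc
          · exact hF (Or.inl hc)
          · exact hF (Or.inr hc)
        by_cases hsub1 : (F : Set (Fin N)) ⊆ Δ₁.vertices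
        · apply Ideal.mem_sup_left; apply Ideal.mem_sup_left
          exact Ideal.subset_span ⟨F, hsub1, hF12.1, rfl⟩
        · obtain ⟨j, hjF, hj1⟩ : ∃ j ∈ F, j ∉ Δ₁.vertices := by
            by_contra hcon
            push_neg at hcon
            exact hsub1 fun x hx => hcon x (by exact_mod_cast hx)
          have hj2 : j ∈ Δ₂.vertices := by
            have : j ∈ Δ₁.vertices ∪ Δ₂.vertices := by
              rw [hcover]; trivial
            rcases this with h | h
            · exact absurd h hj1
            · exact h
          by_cases hsub2 : (F : Set (Fin N)) ⊆ Δ₂.vertices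
          · apply Ideal.mem_sup_left; apply Ideal.mem_sup_right
            exact Ideal.subset_span ⟨F, hsub2, hF12.2, rfl⟩
          · obtain ⟨i, hiF, hi2⟩ : ∃ i ∈ F, i ∉ Δ₂.vertices := by
              by_contra hcon
              push_neg at hcon
              exact hsub2 fun x hx => hcon x (by exact_mod_cast hx)
            have hi1 : i ∈ Δ₁.vertices := by
              have : i ∈ Δ₁.vertices ∪ Δ₂.vertices := by
                rw [hcover]; trivial
              rcases this with h | h
              · exact h
              · exact absurd h hi2
            have hij : i ≠ j := fun hij => hj1 (hij ▸ hi1)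
            have hmem : (X i * X j : MvPolynomial (Fin N) K) ∈
                (relSRIdeal K Δ₁ ⊔ relSRIdeal K Δ₂ ⊔
                  Ideal.span {m | ∃ i ∈ Δ₁.vertices, ∃ j ∈ Δ₂.vertices,
                    m = X i * X j}) :=
              Ideal.mem_sup_right (Ideal.subset_span ⟨i, hi1, j, hj2, rfl⟩)
            have hjF' : j ∈ F.erase i := Finset.mem_erase.mpr ⟨hij.symm, hjF⟩
            have hprod : (∏ k ∈ F, X k : MvPolynomial (Fin N) K)
                = (∏ k ∈ (F.erase i).erase j, X k) * (X i * X j) := by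
              rw [← Finset.mul_prod_erase F _ hiF,
                ← Finset.mul_prod_erase (F.erase i) _ hjF']
              ring
            rw [hprod]
            exact Ideal.mul_mem_left _ _ hmem
      · refine sup_le (sup_le ?_ ?_) ?_
        · rw [relSRIdeal, Ideal.span_le]
          rintro m ⟨F, hFsub, hF1, rfl⟩
          refine Ideal.subset_span ⟨F, ?_, rfl⟩
          rintro (h | h)
          · exact hF1 h
          · -- F ∈ Δ₂.faces, F ⊆ V₁
            have hFne : F.Nonempty := by
              rcases F.eq_empty_or_nonempty with rfl | hne
              · exact absurd Δ₁.empty_mem hF1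
              · exact hne
            obtain ⟨x, hx⟩ := hFne
            have hx2 : ({x} : Finset (Fin N)) ∈ Δ₂.faces :=
              Δ₂.down_closed h (Finset.singleton_subset_iff.mpr hx)
            exact hdisj' x (hFsub (by exact_mod_cast hx)) hx2
        · rw [relSRIdeal, Ideal.span_le]
          rintro m ⟨F, hFsub, hF2, rfl⟩
          refine Ideal.subset_span ⟨F, ?_, rfl⟩
          rintro (h | h)
          · have hFne : F.Nonempty := by
              rcases F.eq_empty_or_nonempty with rfl | hne
              · exact absurd Δ₂.empty_mem hF2
              · exact hne
            obtain ⟨x, hx⟩ := hFne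
            have hx1 : ({x} : Finset (Fin N)) ∈ Δ₁.faces :=
              Δ₁.down_closed h (Finset.singleton_subset_iff.mpr hx)
            exact hdisj' x hx1 (hFsub (by exact_mod_cast hx))
          · exact hF2 h
        · rw [Ideal.span_le]
          rintro m ⟨i, hi, j, hj, rfl⟩
          have hij : i ≠ j := fun h => hdisj' i hi (h ▸ hj)
          refine Ideal.subset_span ⟨{i, j}, ?_, ?_⟩
          · rintro (h | h)
            · have : ({j} : Finset (Fin N)) ∈ Δ₁.faces :=
                Δ₁.down_closed h (by simp)
              exact hdisj' j this hj
            · have : ({i} : Finset (Fin N)) ∈ Δ₂.faces :=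
                Δ₂.down_closed h (by simp)
              exact hdisj' i hi this
          · rw [Finset.prod_pair hij]
    exact ⟨Ideal.quotientEquivAlgOfEq K hIdeq⟩
end
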